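/- arXiv:1005.2958 — 2 statements merged into one kernel-verified Lean document; each statement's English description precedes it below -/
import Mathlib

section
/- Let Φ ∈ ℚ[[x,s]] be the unique formal power series with Φ = exp(x + sΦ); let Ψ₁ := −(1/2)·log(1 − sΦ); let Y := sΦ·(1 − sΦ)^{−1} and let Ψ₂ := Φ^{−1}·( (5/24)·Y³ + (1/8)·Y² ). Suppose Ψ₃ ∈ ℚ[[x,s]] satisfies ∂Ψ₃/∂s = (1/2)·( ∂²Ψ₂/∂x² + 2Φ·∂Ψ₃/∂x + 2·(∂Ψ₁/∂x)·(∂Ψ₂/∂x) ) with initial condition Ψ₃|_{s=0} = 0. Then Ψ₃ = Φ^{−2}·( (5/16)·Y⁶ + (25/48)·Y⁵ + (11/48)·Y⁴ + (1/48)·Y³ ). -/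
/-- Formal partial derivative `∂f/∂x_i` of a multivariate formal power series. -/
noncomputable def pd {σ : Type*} (R : Type*) [CommSemiring R]
    (i : σ) (f : MvPowerSeries σ R) : MvPowerSeries σ R :=
  fun m => (((m i) + 1 : ℕ) : R) * MvPowerSeries.coeff (R := R) (m + Finsupp.single i 1) f

/-- Total degree of a monomial. -/
def mdeg {σ : Type*} (m : σ →₀ ℕ) : ℕ := m.sum fun _ e => e

/-- `exp f = Σ_{k≥0} f^k/k!` for `f` with zero constant coefficient, computed
coefficientwise: since `f^k` has order `≥ k`, only `k ≤ deg m` contribute to the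
coefficient at a monomial `m`. -/
noncomputable def expS {σ R : Type*} [CommRing R] [Algebra ℚ R]
    (f : MvPowerSeries σ R) : MvPowerSeries σ R :=
  fun m => MvPowerSeries.coeff (R := R) m
    (∑ k ∈ Finset.range (mdeg m + 1), ((k.factorial : ℚ)⁻¹) • f ^ k)

/-- `log(1 − u) = −Σ_{k≥1} u^k/k` for `u` with zero constant coefficient, computed
coefficientwise: since `u^k` has order `≥ k`, only `k ≤ deg m` contribute. -/
noncomputable def logOneSubS {σ R : Type*} [CommRing R] [Algebra ℚ R]
    (u : MvPowerSeries σ R) : MvPowerSeries σ R :=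
  fun m => MvPowerSeries.coeff (R := R) m
    (- ∑ k ∈ Finset.Icc 1 (mdeg m), ((k : ℚ)⁻¹) • u ^ k)

/-- The genus-one counting series `Ψ₁ = −½·log(1 − sΦ)`. -/
noncomputable def psiOneComb (Φ : MvPowerSeries (Fin 2) ℚ) : MvPowerSeries (Fin 2) ℚ :=
  -((2 : ℚ)⁻¹) • logOneSubS (MvPowerSeries.X 1 * Φ)

/-- `Y := sΦ·(1 − sΦ)⁻¹`. -/
noncomputable def yComb (Φ : MvPowerSeries (Fin 2) ℚ) : MvPowerSeries (Fin 2) ℚ :=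
  MvPowerSeries.X 1 * Φ * (1 - MvPowerSeries.X 1 * Φ)⁻¹

/-- The genus-two counting series `Ψ₂ = Φ⁻¹·((5/24)Y³ + (1/8)Y²)`. -/
noncomputable def psiTwoComb (Φ : MvPowerSeries (Fin 2) ℚ) : MvPowerSeries (Fin 2) ℚ :=
  Φ⁻¹ * (MvPowerSeries.C (σ := Fin 2) (R := ℚ) (5 / 24) * (yComb Φ) ^ 3 +
    MvPowerSeries.C (σ := Fin 2) (R := ℚ) (1 / 8) * (yComb Φ) ^ 2)


set_option linter.unusedSectionVars false

open MvPowerSeries Finset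

namespace StmtAux

variable {σ : Type*} [DecidableEq σ] {R : Type*} [CommRing R]

theorem coeff_pd (i : σ) (f : MvPowerSeries σ R) (m : σ →₀ ℕ) :
    MvPowerSeries.coeff (R := R) m (pd R i f)
      = ((m i + 1 : ℕ) : R) * MvPowerSeries.coeff (R := R) (m + Finsupp.single i 1) f := rfl

theorem pd_add (i : σ) (f g : MvPowerSeries σ R) :
    pd R i (f + g) = pd R i f + pd R i g := by
  ext m
  simp [coeff_pd, mul_add]

theorem pd_C (i : σ) (c : R) : pd R i (MvPowerSeries.C (σ := σ) (R := R) c) = 0 := by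
  ext m
  rw [coeff_pd, MvPowerSeries.coeff_C]
  rw [if_neg, mul_zero, map_zero]
  intro h
  have := DFunLike.congr_fun h i
  simp [Finsupp.single_apply] at this

theorem pd_one (i : σ) : pd R i (1 : MvPowerSeries σ R) = 0 := by
  rw [← map_one (MvPowerSeries.C (σ := σ) (R := R)), pd_C]

theorem pd_neg (i : σ) (f : MvPowerSeries σ R) : pd R i (-f) = -pd R i f := by
  ext m; simp [coeff_pd, mul_comm]

theorem pd_sub (i : σ) (f g : MvPowerSeries σ R) :
    pd R i (f - g) = pd R i f - pd R i g := by
  ext m; simp [coeff_pd, mul_sub]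

theorem pd_smul (i : σ) (q : ℚ) (f : MvPowerSeries σ ℚ) :
    pd ℚ i (q • f) = q • pd ℚ i f := by
  ext m; simp [coeff_pd]; ring

theorem pd_X_self (i : σ) : pd R i (MvPowerSeries.X i) = 1 := by
  ext m
  rw [coeff_pd, MvPowerSeries.coeff_X, MvPowerSeries.coeff_one]
  by_cases h : m = 0
  · subst h; simp
  · rw [if_neg, if_neg h, mul_zero]
    intro hc
    apply h
    ext j
    have := DFunLike.congr_fun hc j
    simp only [Finsupp.add_apply, Finsupp.single_apply, Finsupp.coe_zero, Pi.zero_apply] at this ⊢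
    by_cases hj : i = j
    · simp only [if_pos hj] at this; omega
    · simpa [if_neg hj] using this

theorem pd_X_ne (i j : σ) (h : j ≠ i) : pd R i (MvPowerSeries.X j) = 0 := by
  ext m
  rw [coeff_pd, MvPowerSeries.coeff_X]
  rw [if_neg, mul_zero, map_zero]
  intro hc
  have h1 := DFunLike.congr_fun hc i
  simp [Finsupp.single_apply, if_neg h] at h1

end StmtAux

namespace StmtAux
variable {σ : Type*} [DecidableEq σ] {R : Type*} [CommRing R]

theorem pd_ofNat (i : σ) (n : ℕ) [n.AtLeastTwo] :
    pd R i (no_index (OfNat.ofNat n) : MvPowerSeries σ R) = 0 := by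
  rw [← map_ofNat (MvPowerSeries.C (σ := σ) (R := R)) n, pd_C]

end StmtAux

namespace StmtAux

variable {σ : Type*} [DecidableEq σ] {R : Type*} [CommRing R]

theorem sum_shift (i : σ) (f g : MvPowerSeries σ R) (m : σ →₀ ℕ) :
    ∑ p ∈ antidiagonal (m + Finsupp.single i 1),
        (((p.1 : σ →₀ ℕ) i : ℕ) : R) * (MvPowerSeries.coeff (R := R) p.1 f * MvPowerSeries.coeff (R := R) p.2 g)
    = ∑ p ∈ antidiagonal m,
        (((p.1 : σ →₀ ℕ) i + 1 : ℕ) : R) *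
          (MvPowerSeries.coeff (R := R) (p.1 + Finsupp.single i 1) f * MvPowerSeries.coeff (R := R) p.2 g) := by
  have hne : ∀ p ∈ antidiagonal (m + Finsupp.single i 1),
      (((p.1 : σ →₀ ℕ) i : ℕ) : R) * (MvPowerSeries.coeff (R := R) p.1 f * MvPowerSeries.coeff (R := R) p.2 g) ≠ 0 →
      p.1 i ≠ 0 := by
    rintro ⟨a, b⟩ _ ha h0
    apply ha
    simp [h0]
  rw [← Finset.sum_filter_of_ne hne]
  refine Finset.sum_nbij' (fun p => (p.1 - Finsupp.single i 1, p.2))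
      (fun p => (p.1 + Finsupp.single i 1, p.2)) ?_ ?_ ?_ ?_ ?_
  · rintro ⟨a, b⟩ hab
    simp only [Finset.mem_filter, Finset.HasAntidiagonal.mem_antidiagonal] at hab
    obtain ⟨hab, ha⟩ := hab
    rw [Finset.HasAntidiagonal.mem_antidiagonal]
    ext j
    have := DFunLike.congr_fun hab j
    simp only [Finsupp.add_apply, Finsupp.tsub_apply, Finsupp.single_apply] at this ⊢
    by_cases hj : i = j
    · subst hj
      simp only [eq_self_iff_true, if_true] at this ⊢
      have hai : a i ≠ 0 := ha
      omega
    · simp only [if_neg hj] at this ⊢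
      omega
  · rintro ⟨a, b⟩ hab
    rw [Finset.HasAntidiagonal.mem_antidiagonal] at hab
    simp only [Finset.mem_filter, Finset.HasAntidiagonal.mem_antidiagonal]
    constructor
    · rw [← hab]
      ext j
      simp only [Finsupp.add_apply]
      ring
    · simp [Finsupp.add_apply, Finsupp.single_eq_same]
  · rintro ⟨a, b⟩ hab
    simp only [Finset.mem_filter, Finset.HasAntidiagonal.mem_antidiagonal] at hab
    have hle : Finsupp.single i 1 ≤ a := by
      rw [Finsupp.single_le_iff]
      omega
    simp [tsub_add_cancel_of_le hle]
  · rintro ⟨a, b⟩ hab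
    simp
  · rintro ⟨a, b⟩ hab
    simp only [Finset.mem_filter, Finset.HasAntidiagonal.mem_antidiagonal] at hab
    have hle : Finsupp.single i 1 ≤ a := by
      rw [Finsupp.single_le_iff]
      omega
    have hsub : a - Finsupp.single i 1 + Finsupp.single i 1 = a := tsub_add_cancel_of_le hle
    simp only [hsub]
    congr 2
    simp only [Finsupp.tsub_apply, Finsupp.single_eq_same]
    omega

theorem sum_shift₂ (i : σ) (f g : MvPowerSeries σ R) (m : σ →₀ ℕ) :
    ∑ p ∈ antidiagonal (m + Finsupp.single i 1),
        (((p.2 : σ →₀ ℕ) i : ℕ) : R) * (MvPowerSeries.coeff (R := R) p.1 f * MvPowerSeries.coeff (R := R) p.2 g)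
    = ∑ p ∈ antidiagonal m,
        (((p.2 : σ →₀ ℕ) i + 1 : ℕ) : R) *
          (MvPowerSeries.coeff (R := R) p.1 f * MvPowerSeries.coeff (R := R) (p.2 + Finsupp.single i 1) g) := by
  have h1 := sum_shift i g f m
  calc ∑ p ∈ antidiagonal (m + Finsupp.single i 1),
        (((p.2 : σ →₀ ℕ) i : ℕ) : R) * (MvPowerSeries.coeff (R := R) p.1 f * MvPowerSeries.coeff (R := R) p.2 g)
      = ∑ p ∈ antidiagonal (m + Finsupp.single i 1),
        (((p.1 : σ →₀ ℕ) i : ℕ) : R) * (MvPowerSeries.coeff (R := R) p.1 g * MvPowerSeries.coeff (R := R) p.2 f) := by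
        conv_lhs => rw [← Finset.HasAntidiagonal.map_swap_antidiagonal]
        rw [Finset.sum_map]
        apply Finset.sum_congr rfl
        rintro ⟨a, b⟩ _
        simp only [Function.Embedding.coeFn_mk, Prod.fst_swap, Prod.snd_swap]
        ring
    _ = ∑ p ∈ antidiagonal m,
        (((p.1 : σ →₀ ℕ) i + 1 : ℕ) : R) *
          (MvPowerSeries.coeff (R := R) (p.1 + Finsupp.single i 1) g * MvPowerSeries.coeff (R := R) p.2 f) := h1
    _ = _ := by
        conv_rhs => rw [← Finset.HasAntidiagonal.map_swap_antidiagonal]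
        rw [Finset.sum_map]
        apply Finset.sum_congr rfl
        rintro ⟨a, b⟩ _
        simp only [Function.Embedding.coeFn_mk, Prod.fst_swap, Prod.snd_swap]
        ring

theorem pd_mul (i : σ) (f g : MvPowerSeries σ R) :
    pd R i (f * g) = pd R i f * g + f * pd R i g := by
  ext m
  rw [map_add, coeff_pd, MvPowerSeries.coeff_mul, MvPowerSeries.coeff_mul, MvPowerSeries.coeff_mul,
    Finset.mul_sum]
  have key : ∀ p ∈ antidiagonal (m + Finsupp.single i 1),
      ((m i + 1 : ℕ) : R) * (MvPowerSeries.coeff (R := R) p.1 f * MvPowerSeries.coeff (R := R) p.2 g)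
      = (((p.1 : σ →₀ ℕ) i : ℕ) : R) * (MvPowerSeries.coeff (R := R) p.1 f * MvPowerSeries.coeff (R := R) p.2 g)
        + (((p.2 : σ →₀ ℕ) i : ℕ) : R) * (MvPowerSeries.coeff (R := R) p.1 f * MvPowerSeries.coeff (R := R) p.2 g) := by
    rintro ⟨a, b⟩ hab
    rw [Finset.HasAntidiagonal.mem_antidiagonal] at hab
    have := DFunLike.congr_fun hab i
    simp only [Finsupp.add_apply, Finsupp.single_eq_same] at this
    have hcast : ((m i + 1 : ℕ) : R) = ((a i : ℕ) : R) + ((b i : ℕ) : R) := by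
      rw [← Nat.cast_add]
      congr 1
      omega
    rw [hcast]
    ring
  rw [Finset.sum_congr rfl key, Finset.sum_add_distrib, sum_shift, sum_shift₂]
  congr 1
  · apply Finset.sum_congr rfl
    rintro ⟨a, b⟩ _
    rw [coeff_pd]
    ring
  · apply Finset.sum_congr rfl
    rintro ⟨a, b⟩ _
    rw [coeff_pd]
    ring

theorem pd_pow (i : σ) (f : MvPowerSeries σ R) (n : ℕ) :
    pd R i (f ^ (n + 1)) = (n + 1) • (f ^ n * pd R i f) := by
  induction n with
  | zero => simp [pd_mul]
  | succ k ih =>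
    rw [pow_succ, pd_mul, ih]
    have : f ^ (k + 1) = f ^ k * f := pow_succ f k
    rw [this]
    simp only [succ_nsmul, add_smul, smul_mul_assoc, mul_smul_comm, nsmul_eq_mul]
    push_cast
    ring

end StmtAux

namespace StmtAux

variable {σ : Type*} [DecidableEq σ]

theorem pd_zero (i : σ) {R : Type*} [CommRing R] : pd R i (0 : MvPowerSeries σ R) = 0 := by
  ext m; simp [coeff_pd]

theorem pd_sum (i : σ) {R : Type*} [CommRing R] {α : Type*} (t : Finset α)
    (F : α → MvPowerSeries σ R) :
    pd R i (∑ k ∈ t, F k) = ∑ k ∈ t, pd R i (F k) := by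
  classical
  induction t using Finset.induction with
  | empty => simp [pd_zero]
  | insert a s hs ih => rw [Finset.sum_insert hs, Finset.sum_insert hs, pd_add, ih]

theorem mdeg_add (a b : σ →₀ ℕ) : mdeg (a + b) = mdeg a + mdeg b := by
  unfold mdeg
  exact Finsupp.sum_add_index' (fun _ => rfl) (fun _ _ _ => rfl)

theorem mdeg_eq_zero {a : σ →₀ ℕ} (h : mdeg a = 0) : a = 0 := by
  ext j
  simp only [Finsupp.coe_zero, Pi.zero_apply]
  by_cases hj : j ∈ a.support
  · have : a j ≤ mdeg a := by
      unfold mdeg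
      rw [Finsupp.sum]
      exact Finset.single_le_sum (f := fun x => a x) (fun _ _ => Nat.zero_le _) hj
    omega
  · simpa [Finsupp.notMem_support_iff] using hj

theorem coeff_pow_eq_zero {u : MvPowerSeries σ ℚ} (hu : MvPowerSeries.constantCoeff (σ := σ) (R := ℚ) u = 0)
    {k : ℕ} {m : σ →₀ ℕ} (h : mdeg m < k) : MvPowerSeries.coeff (R := ℚ) m (u ^ k) = 0 := by
  induction k generalizing m with
  | zero => omega
  | succ n ih =>
    rw [pow_succ, mul_comm, MvPowerSeries.coeff_mul]
    apply Finset.sum_eq_zero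
    rintro ⟨a, b⟩ hab
    rw [Finset.HasAntidiagonal.mem_antidiagonal] at hab
    by_cases ha : a = 0
    · subst ha
      rw [MvPowerSeries.coeff_zero_eq_constantCoeff, hu, zero_mul]
    · have h1 : 1 ≤ mdeg a := by
        rcases Nat.eq_zero_or_pos (mdeg a) with h0 | h0
        · exact absurd (mdeg_eq_zero h0) ha
        · exact h0
      have : mdeg b < n := by
        have := mdeg_add a b
        rw [hab] at this
        omega
      rw [ih this, mul_zero]

theorem coeff_mul_pow_eq_zero {u v : MvPowerSeries σ ℚ}
    (hu : MvPowerSeries.constantCoeff (σ := σ) (R := ℚ) u = 0)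
    {k : ℕ} {m : σ →₀ ℕ} (h : mdeg m < k) : MvPowerSeries.coeff (R := ℚ) m (v * u ^ k) = 0 := by
  rw [MvPowerSeries.coeff_mul]
  apply Finset.sum_eq_zero
  rintro ⟨a, b⟩ hab
  rw [Finset.HasAntidiagonal.mem_antidiagonal] at hab
  have hb : mdeg b < k := by
    have := mdeg_add a b
    rw [hab] at this
    omega
  rw [coeff_pow_eq_zero hu hb, mul_zero]

theorem coeff_inv_one_sub {u : MvPowerSeries σ ℚ} (hu : MvPowerSeries.constantCoeff (σ := σ) (R := ℚ) u = 0)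
    {K : ℕ} {m : σ →₀ ℕ} (h : mdeg m < K) :
    MvPowerSeries.coeff (R := ℚ) m ((1 - u)⁻¹) = MvPowerSeries.coeff (R := ℚ) m (∑ j ∈ Finset.range K, u ^ j) := by
  have hc : MvPowerSeries.constantCoeff (σ := σ) (R := ℚ) (1 - u) ≠ 0 := by simp [hu]
  have hinv : (1 - u)⁻¹ * (1 - u) = 1 := MvPowerSeries.inv_mul_cancel _ hc
  have hg : (∑ j ∈ Finset.range K, u ^ j) * (1 - u) = 1 - u ^ K := by
    have := geom_sum_mul u K
    have h2 : (∑ j ∈ Finset.range K, u ^ j) * (u - 1) = u ^ K - 1 := this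
    linear_combination -h2
  have key : (∑ j ∈ Finset.range K, u ^ j) = (1 - u)⁻¹ - (1 - u)⁻¹ * u ^ K := by
    calc (∑ j ∈ Finset.range K, u ^ j)
        = (1 - u)⁻¹ * ((∑ j ∈ Finset.range K, u ^ j) * (1 - u)) := by
          rw [mul_comm (∑ j ∈ Finset.range K, u ^ j) (1 - u), ← mul_assoc, hinv, one_mul]
      _ = (1 - u)⁻¹ * (1 - u ^ K) := by rw [hg]
      _ = (1 - u)⁻¹ - (1 - u)⁻¹ * u ^ K := by ring
  rw [key, map_sub, coeff_mul_pow_eq_zero hu h, sub_zero]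

end StmtAux

namespace StmtAux

theorem mdeg_zero {σ : Type*} : mdeg (0 : σ →₀ ℕ) = 0 := by
  unfold mdeg
  simp

theorem coeff_X1_mul {W : MvPowerSeries (Fin 2) ℚ} {m : Fin 2 →₀ ℕ} (hm : m 1 = 0) :
    MvPowerSeries.coeff (R := ℚ) m (MvPowerSeries.X 1 * W) = 0 := by
  rw [MvPowerSeries.coeff_mul]
  apply Finset.sum_eq_zero
  rintro ⟨a, b⟩ hab
  rw [Finset.HasAntidiagonal.mem_antidiagonal] at hab
  rw [MvPowerSeries.coeff_X, if_neg, zero_mul]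
  intro h
  subst h
  have := DFunLike.congr_fun hab 1
  simp only [Finsupp.add_apply, Finsupp.single_eq_same] at this
  omega

end StmtAux

namespace StmtAux

variable {σ : Type*} [DecidableEq σ]

theorem mdeg_single (i : σ) : mdeg (Finsupp.single i 1) = 1 := by
  unfold mdeg
  rw [Finsupp.sum_single_index]
  rfl

theorem coeff_expS_eq {f : MvPowerSeries σ ℚ} (hf : MvPowerSeries.constantCoeff (σ := σ) (R := ℚ) f = 0)
    {K : ℕ} {m : σ →₀ ℕ} (h : mdeg m < K) :
    MvPowerSeries.coeff (R := ℚ) m (expS f)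
      = MvPowerSeries.coeff (R := ℚ) m (∑ k ∈ Finset.range K, ((k.factorial : ℚ)⁻¹) • f ^ k) := by
  have h0 : MvPowerSeries.coeff (R := ℚ) m (expS f)
      = MvPowerSeries.coeff (R := ℚ) m
          (∑ k ∈ Finset.range (mdeg m + 1), ((k.factorial : ℚ)⁻¹) • f ^ k) := rfl
  rw [h0, map_sum, map_sum]
  apply Finset.sum_subset
  · exact Finset.range_subset_range.mpr (by omega)
  · intro k _ hk
    rw [Finset.mem_range, not_lt] at hk
    rw [map_smul, coeff_pow_eq_zero hf (by omega), smul_zero]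

theorem coeff_logOneSubS_eq {u : MvPowerSeries σ ℚ}
    (hu : MvPowerSeries.constantCoeff (σ := σ) (R := ℚ) u = 0)
    {K : ℕ} {m : σ →₀ ℕ} (h : mdeg m ≤ K) :
    MvPowerSeries.coeff (R := ℚ) m (logOneSubS u)
      = MvPowerSeries.coeff (R := ℚ) m (- ∑ k ∈ Finset.Icc 1 K, ((k : ℚ)⁻¹) • u ^ k) := by
  have h0 : MvPowerSeries.coeff (R := ℚ) m (logOneSubS u)
      = MvPowerSeries.coeff (R := ℚ) m (- ∑ k ∈ Finset.Icc 1 (mdeg m), ((k : ℚ)⁻¹) • u ^ k) := rfl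
  rw [h0, map_neg, map_neg, map_sum, map_sum]
  congr 1
  apply Finset.sum_subset
  · exact Finset.Icc_subset_Icc_right h
  · intro k hk1 hk
    rw [Finset.mem_Icc] at hk1 hk
    rw [map_smul, coeff_pow_eq_zero hu (by omega), smul_zero]

theorem pd_expS {f : MvPowerSeries σ ℚ} (hf : MvPowerSeries.constantCoeff (σ := σ) (R := ℚ) f = 0) (i : σ) :
    pd ℚ i (expS f) = pd ℚ i f * expS f := by
  ext m
  rw [coeff_pd]
  have hme : mdeg (m + Finsupp.single i 1) = mdeg m + 1 := by
    rw [mdeg_add, mdeg_single]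
  rw [coeff_expS_eq hf (K := mdeg m + 2) (by omega)]
  rw [← coeff_pd]
  have hpd : pd ℚ i (∑ k ∈ Finset.range (mdeg m + 2), ((k.factorial : ℚ)⁻¹) • f ^ k)
      = pd ℚ i f * (∑ k ∈ Finset.range (mdeg m + 1), ((k.factorial : ℚ)⁻¹) • f ^ k) := by
    rw [pd_sum, Finset.sum_range_succ']
    simp only [pd_smul]
    rw [pow_zero, pd_one, smul_zero, add_zero, Finset.mul_sum]
    apply Finset.sum_congr rfl
    intro k _
    rw [pd_pow, ← Nat.cast_smul_eq_nsmul ℚ, smul_smul, mul_smul_comm]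
    have hk1 : ((k + 1 : ℕ) : ℚ) ≠ 0 := by positivity
    have hkf : ((k.factorial : ℚ)) ≠ 0 := Nat.cast_ne_zero.mpr k.factorial_ne_zero
    have hsc : (((k + 1).factorial : ℚ))⁻¹ * ((k + 1 : ℕ) : ℚ) = (k.factorial : ℚ)⁻¹ := by
      rw [Nat.factorial_succ]
      push_cast
      field_simp
    rw [hsc, mul_comm (f ^ k) (pd ℚ i f)]
  rw [hpd, MvPowerSeries.coeff_mul, MvPowerSeries.coeff_mul]
  apply Finset.sum_congr rfl
  rintro ⟨a, b⟩ hab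
  rw [Finset.HasAntidiagonal.mem_antidiagonal] at hab
  congr 1
  have hb : mdeg b < mdeg m + 1 := by
    have := mdeg_add a b
    rw [hab] at this
    omega
  exact (coeff_expS_eq hf hb).symm

theorem pd_logOneSubS {u : MvPowerSeries σ ℚ}
    (hu : MvPowerSeries.constantCoeff (σ := σ) (R := ℚ) u = 0) (i : σ) :
    pd ℚ i (logOneSubS u) = -(pd ℚ i u * (1 - u)⁻¹) := by
  ext m
  rw [coeff_pd]
  have hme : mdeg (m + Finsupp.single i 1) = mdeg m + 1 := by
    rw [mdeg_add, mdeg_single]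
  rw [coeff_logOneSubS_eq hu (K := mdeg m + 1) (by omega)]
  rw [← coeff_pd]
  have hpd : pd ℚ i (- ∑ k ∈ Finset.Icc 1 (mdeg m + 1), ((k : ℚ)⁻¹) • u ^ k)
      = -(pd ℚ i u * (∑ j ∈ Finset.range (mdeg m + 1), u ^ j)) := by
    rw [pd_neg, pd_sum]
    congr 1
    have hIcc : ∑ k ∈ Finset.Icc 1 (mdeg m + 1), pd ℚ i (((k : ℚ)⁻¹) • u ^ k)
        = ∑ k ∈ Finset.range (mdeg m + 2), pd ℚ i (((k : ℚ)⁻¹) • u ^ k) := by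
      apply Finset.sum_subset
      · intro k hk
        rw [Finset.mem_Icc] at hk
        rw [Finset.mem_range]
        omega
      · intro k hk1 hk2
        rw [Finset.mem_range] at hk1
        rw [Finset.mem_Icc] at hk2
        have hk0 : k = 0 := by omega
        subst hk0
        rw [pow_zero, pd_smul, pd_one, smul_zero]
    rw [hIcc, Finset.sum_range_succ']
    rw [pow_zero, pd_smul, pd_one, smul_zero, add_zero, Finset.mul_sum]
    apply Finset.sum_congr rfl
    intro j _
    rw [pd_smul, pd_pow, ← Nat.cast_smul_eq_nsmul ℚ, smul_smul]
    have : ((j + 1 : ℕ) : ℚ)⁻¹ * ((j + 1 : ℕ) : ℚ) = 1 := by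
      have hj1 : ((j + 1 : ℕ) : ℚ) ≠ 0 := by positivity
      field_simp
    rw [this, one_smul, mul_comm (u ^ j) (pd ℚ i u)]
  rw [hpd, map_neg, map_neg, MvPowerSeries.coeff_mul, MvPowerSeries.coeff_mul]
  congr 1
  apply Finset.sum_congr rfl
  rintro ⟨a, b⟩ hab
  rw [Finset.HasAntidiagonal.mem_antidiagonal] at hab
  congr 1
  have hb : mdeg b < mdeg m + 1 := by
    have := mdeg_add a b
    rw [hab] at this
    omega
  exact (coeff_inv_one_sub hu hb).symm

end StmtAux


set_option maxHeartbeats 4000000 in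
open StmtAux in
/-- Let `Φ = exp(x + sΦ)`, `Ψ₁ = −½log(1 − sΦ)`,
`Ψ₂ = Φ⁻¹((5/24)Y³ + (1/8)Y²)`.  If `Ψ₃` satisfies
`∂Ψ₃/∂s = ½(∂²Ψ₂/∂x² + 2Φ·∂Ψ₃/∂x + 2·(∂Ψ₁/∂x)(∂Ψ₂/∂x))` with `Ψ₃|_{s=0} = 0`, then
`Ψ₃ = Φ⁻²·((5/16)Y⁶ + (25/48)Y⁵ + (11/48)Y⁴ + (1/48)Y³)`. -/
theorem stmt16 (Φ Ψ₃ : MvPowerSeries (Fin 2) ℚ)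
    (hΦ : Φ = expS (MvPowerSeries.X 0 + MvPowerSeries.X 1 * Φ))
    (heq : pd ℚ 1 Ψ₃ = (2 : ℚ)⁻¹ •
      (pd ℚ 0 (pd ℚ 0 (psiTwoComb Φ)) + 2 * Φ * pd ℚ 0 Ψ₃ +
        2 * pd ℚ 0 (psiOneComb Φ) * pd ℚ 0 (psiTwoComb Φ)))
    (hinit : ∀ n : ℕ, MvPowerSeries.coeff (R := ℚ) (Finsupp.single 0 n) Ψ₃ = 0) :
    Ψ₃ = (Φ⁻¹) ^ 2 * (MvPowerSeries.C (σ := Fin 2) (R := ℚ) (5 / 16) * (yComb Φ) ^ 6 +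
      MvPowerSeries.C (σ := Fin 2) (R := ℚ) (25 / 48) * (yComb Φ) ^ 5 +
      MvPowerSeries.C (σ := Fin 2) (R := ℚ) (11 / 48) * (yComb Φ) ^ 4 +
      MvPowerSeries.C (σ := Fin 2) (R := ℚ) (1 / 48) * (yComb Φ) ^ 3) := by
  set T := (Φ⁻¹) ^ 2 * (MvPowerSeries.C (σ := Fin 2) (R := ℚ) (5 / 16) * (yComb Φ) ^ 6 +
      MvPowerSeries.C (σ := Fin 2) (R := ℚ) (25 / 48) * (yComb Φ) ^ 5 +
      MvPowerSeries.C (σ := Fin 2) (R := ℚ) (11 / 48) * (yComb Φ) ^ 4 +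
      MvPowerSeries.C (σ := Fin 2) (R := ℚ) (1 / 48) * (yComb Φ) ^ 3) with hTdef
  -- basic constant-coefficient facts
  have hf0 : MvPowerSeries.constantCoeff (σ := Fin 2) (R := ℚ)
      (MvPowerSeries.X 0 + MvPowerSeries.X 1 * Φ) = 0 := by
    simp
  have hu0 : MvPowerSeries.constantCoeff (σ := Fin 2) (R := ℚ) (MvPowerSeries.X 1 * Φ) = 0 := by
    simp
  have hΦ0 : MvPowerSeries.constantCoeff (σ := Fin 2) (R := ℚ) Φ = 1 := by
    conv_lhs => rw [hΦ]
    rw [← MvPowerSeries.coeff_zero_eq_constantCoeff]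
    rw [coeff_expS_eq hf0 (K := 1) (by rw [mdeg_zero]; omega)]
    rw [Finset.sum_range_one]
    simp
  have hAI : Φ * Φ⁻¹ = 1 := MvPowerSeries.mul_inv_cancel _ (by rw [hΦ0]; norm_num)
  have hBB : (1 - MvPowerSeries.X 1 * Φ) * (1 - MvPowerSeries.X 1 * Φ)⁻¹ = 1 :=
    MvPowerSeries.mul_inv_cancel _ (by simp [hu0])
  -- derivative rules for the atoms
  have hX10 : pd ℚ 0 (MvPowerSeries.X 1 : MvPowerSeries (Fin 2) ℚ) = 0 :=
    pd_X_ne 0 1 (by decide)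
  have hX01 : pd ℚ 1 (MvPowerSeries.X 0 : MvPowerSeries (Fin 2) ℚ) = 0 :=
    pd_X_ne 1 0 (by decide)
  have hpdPhi : ∀ i : Fin 2, pd ℚ i Φ
      = pd ℚ i (MvPowerSeries.X 0 + MvPowerSeries.X 1 * Φ) * Φ := by
    intro i
    conv_lhs => rw [hΦ]
    rw [pd_expS hf0 i, ← hΦ]
  have hDPhi : pd ℚ 0 Φ = Φ * (1 - MvPowerSeries.X 1 * Φ)⁻¹ := by
    have h0 := hpdPhi 0
    rw [pd_add, pd_X_self, pd_mul, hX10] at h0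
    have e2 : pd ℚ 0 Φ * (1 - MvPowerSeries.X 1 * Φ) = Φ := by linear_combination h0
    linear_combination (1 - MvPowerSeries.X 1 * Φ)⁻¹ * e2 - pd ℚ 0 Φ * hBB
  have hSPhi : pd ℚ 1 Φ = Φ * Φ * (1 - MvPowerSeries.X 1 * Φ)⁻¹ := by
    have h1 := hpdPhi 1
    rw [pd_add, hX01, pd_mul, pd_X_self] at h1
    have e2 : pd ℚ 1 Φ * (1 - MvPowerSeries.X 1 * Φ) = Φ * Φ := by linear_combination h1
    linear_combination (1 - MvPowerSeries.X 1 * Φ)⁻¹ * e2 - pd ℚ 1 Φ * hBB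
  have hDB : pd ℚ 0 ((1 - MvPowerSeries.X 1 * Φ)⁻¹)
      = MvPowerSeries.X 1 * Φ * ((1 - MvPowerSeries.X 1 * Φ)⁻¹ *
          (1 - MvPowerSeries.X 1 * Φ)⁻¹ * (1 - MvPowerSeries.X 1 * Φ)⁻¹) := by
    have hb0 := congrArg (pd ℚ 0) hBB
    rw [pd_mul, pd_sub, pd_one, pd_mul, hX10, hDPhi] at hb0
    have e2 : (1 - MvPowerSeries.X 1 * Φ) * pd ℚ 0 ((1 - MvPowerSeries.X 1 * Φ)⁻¹)
        = MvPowerSeries.X 1 * Φ *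
            ((1 - MvPowerSeries.X 1 * Φ)⁻¹ * (1 - MvPowerSeries.X 1 * Φ)⁻¹) := by
      linear_combination hb0
    linear_combination (1 - MvPowerSeries.X 1 * Φ)⁻¹ * e2
      - pd ℚ 0 ((1 - MvPowerSeries.X 1 * Φ)⁻¹) * hBB
  have hSB : pd ℚ 1 ((1 - MvPowerSeries.X 1 * Φ)⁻¹)
      = Φ * ((1 - MvPowerSeries.X 1 * Φ)⁻¹ *
          (1 - MvPowerSeries.X 1 * Φ)⁻¹ * (1 - MvPowerSeries.X 1 * Φ)⁻¹) := by
    have hb1 := congrArg (pd ℚ 1) hBB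
    rw [pd_mul, pd_sub, pd_one, pd_mul, pd_X_self, hSPhi] at hb1
    have e2 : (1 - MvPowerSeries.X 1 * Φ) * pd ℚ 1 ((1 - MvPowerSeries.X 1 * Φ)⁻¹)
        = Φ * (1 - MvPowerSeries.X 1 * Φ)⁻¹ + MvPowerSeries.X 1 * (Φ * Φ) *
            ((1 - MvPowerSeries.X 1 * Φ)⁻¹ * (1 - MvPowerSeries.X 1 * Φ)⁻¹) := by
      linear_combination hb1
    linear_combination (1 - MvPowerSeries.X 1 * Φ)⁻¹ * e2
      - (pd ℚ 1 ((1 - MvPowerSeries.X 1 * Φ)⁻¹)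
          + Φ * ((1 - MvPowerSeries.X 1 * Φ)⁻¹ * (1 - MvPowerSeries.X 1 * Φ)⁻¹)) * hBB
  have hDI : pd ℚ 0 (Φ⁻¹) = -((1 - MvPowerSeries.X 1 * Φ)⁻¹ * Φ⁻¹) := by
    have ha0 := congrArg (pd ℚ 0) hAI
    rw [pd_mul, pd_one, hDPhi] at ha0
    linear_combination Φ⁻¹ * ha0
      - (pd ℚ 0 (Φ⁻¹) + (1 - MvPowerSeries.X 1 * Φ)⁻¹ * Φ⁻¹) * hAI
  have hSI : pd ℚ 1 (Φ⁻¹) = -((1 - MvPowerSeries.X 1 * Φ)⁻¹) := by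
    have ha1 := congrArg (pd ℚ 1) hAI
    rw [pd_mul, pd_one, hSPhi] at ha1
    linear_combination Φ⁻¹ * ha1
      - (pd ℚ 1 (Φ⁻¹) + (1 - MvPowerSeries.X 1 * Φ)⁻¹ * (Φ * Φ⁻¹ + 1)) * hAI
  -- constant relations
  have hc2 : MvPowerSeries.C (σ := Fin 2) (R := ℚ) (5/24) * 24 = 5 := by
    have h : (5/24 : ℚ) * 24 = (5 : ℚ) := by norm_num
    rw [← map_ofNat (MvPowerSeries.C (σ := Fin 2) (R := ℚ)) 24, ← map_mul, h, map_ofNat]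
  have hc3 : MvPowerSeries.C (σ := Fin 2) (R := ℚ) (1/8) * 8 = 1 := by
    have h : (1/8 : ℚ) * 8 = (1 : ℚ) := by norm_num
    rw [← map_ofNat (MvPowerSeries.C (σ := Fin 2) (R := ℚ)) 8, ← map_mul, h, map_one]
  have hc4 : MvPowerSeries.C (σ := Fin 2) (R := ℚ) (5/16) * 16 = 5 := by
    have h : (5/16 : ℚ) * 16 = (5 : ℚ) := by norm_num
    rw [← map_ofNat (MvPowerSeries.C (σ := Fin 2) (R := ℚ)) 16, ← map_mul, h, map_ofNat]
  have hc5 : MvPowerSeries.C (σ := Fin 2) (R := ℚ) (25/48) * 48 = 25 := by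
    have h : (25/48 : ℚ) * 48 = (25 : ℚ) := by norm_num
    rw [← map_ofNat (MvPowerSeries.C (σ := Fin 2) (R := ℚ)) 48, ← map_mul, h, map_ofNat]
  have hc6 : MvPowerSeries.C (σ := Fin 2) (R := ℚ) (11/48) * 48 = 11 := by
    have h : (11/48 : ℚ) * 48 = (11 : ℚ) := by norm_num
    rw [← map_ofNat (MvPowerSeries.C (σ := Fin 2) (R := ℚ)) 48, ← map_mul, h, map_ofNat]
  have hc8 : MvPowerSeries.C (σ := Fin 2) (R := ℚ) (1/48) * 48 = 1 := by
    have h : (1/48 : ℚ) * 48 = (1 : ℚ) := by norm_num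
    rw [← map_ofNat (MvPowerSeries.C (σ := Fin 2) (R := ℚ)) 48, ← map_mul, h, map_one]
  have hc7 : MvPowerSeries.C (σ := Fin 2) (R := ℚ) 2⁻¹ * 2 = 1 := by
    have h : (2⁻¹ : ℚ) * 2 = (1 : ℚ) := by norm_num
    rw [← map_ofNat (MvPowerSeries.C (σ := Fin 2) (R := ℚ)) 2, ← map_mul, h, map_one]
  -- explicit polynomial forms of the derivatives
  have hDPsi1 : pd ℚ 0 (psiOneComb Φ) = MvPowerSeries.C (σ := Fin 2) (R := ℚ) 2⁻¹ * (MvPowerSeries.X 1 * Φ * ((1 - MvPowerSeries.X 1 * Φ)⁻¹ * (1 - MvPowerSeries.X 1 * Φ)⁻¹)) := by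
    unfold psiOneComb
    rw [pd_smul, pd_logOneSubS hu0 0, smul_neg, neg_smul, neg_neg,
      MvPowerSeries.smul_eq_C_mul]
    simp only [pd_mul, hDPhi, hX10]
    ring
  have hPsi2 : psiTwoComb Φ = (MvPowerSeries.X 1) * (MvPowerSeries.X 1) * (Φ) * (Φ) * ((1 - MvPowerSeries.X 1 * Φ)⁻¹) * ((1 - MvPowerSeries.X 1 * Φ)⁻¹) * (Φ⁻¹) * (MvPowerSeries.C (σ := Fin 2) (R := ℚ) (1/8))
        + (MvPowerSeries.X 1) * (MvPowerSeries.X 1) * (MvPowerSeries.X 1) * (Φ) * (Φ) * (Φ) * ((1 - MvPowerSeries.X 1 * Φ)⁻¹) * ((1 - MvPowerSeries.X 1 * Φ)⁻¹) * ((1 - MvPowerSeries.X 1 * Φ)⁻¹) * (Φ⁻¹) * (MvPowerSeries.C (σ := Fin 2) (R := ℚ) (5/24)) := by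
    unfold psiTwoComb yComb
    ring
  have hDPsi2 : pd ℚ 0 (psiTwoComb Φ) = (MvPowerSeries.X 1) * (MvPowerSeries.X 1) * (Φ) * (Φ) * ((1 - MvPowerSeries.X 1 * Φ)⁻¹) * ((1 - MvPowerSeries.X 1 * Φ)⁻¹) * ((1 - MvPowerSeries.X 1 * Φ)⁻¹) * (Φ⁻¹) * (MvPowerSeries.C (σ := Fin 2) (R := ℚ) (1/8))
        + (2 : MvPowerSeries (Fin 2) ℚ) * (MvPowerSeries.X 1) * (MvPowerSeries.X 1) * (MvPowerSeries.X 1) * (Φ) * (Φ) * (Φ) * ((1 - MvPowerSeries.X 1 * Φ)⁻¹) * ((1 - MvPowerSeries.X 1 * Φ)⁻¹) * ((1 - MvPowerSeries.X 1 * Φ)⁻¹) * ((1 - MvPowerSeries.X 1 * Φ)⁻¹) * (Φ⁻¹) * (MvPowerSeries.C (σ := Fin 2) (R := ℚ) (1/8))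
        + (2 : MvPowerSeries (Fin 2) ℚ) * (MvPowerSeries.X 1) * (MvPowerSeries.X 1) * (MvPowerSeries.X 1) * (Φ) * (Φ) * (Φ) * ((1 - MvPowerSeries.X 1 * Φ)⁻¹) * ((1 - MvPowerSeries.X 1 * Φ)⁻¹) * ((1 - MvPowerSeries.X 1 * Φ)⁻¹) * ((1 - MvPowerSeries.X 1 * Φ)⁻¹) * (Φ⁻¹) * (MvPowerSeries.C (σ := Fin 2) (R := ℚ) (5/24))
        + (3 : MvPowerSeries (Fin 2) ℚ) * (MvPowerSeries.X 1) * (MvPowerSeries.X 1) * (MvPowerSeries.X 1) * (MvPowerSeries.X 1) * (Φ) * (Φ) * (Φ) * (Φ) * ((1 - MvPowerSeries.X 1 * Φ)⁻¹) * ((1 - MvPowerSeries.X 1 * Φ)⁻¹) * ((1 - MvPowerSeries.X 1 * Φ)⁻¹) * ((1 - MvPowerSeries.X 1 * Φ)⁻¹) * ((1 - MvPowerSeries.X 1 * Φ)⁻¹) * (Φ⁻¹) * (MvPowerSeries.C (σ := Fin 2) (R := ℚ) (5/24)) := by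
    rw [hPsi2]
    simp only [pd_add, pd_mul, pd_C, pd_ofNat, hDPhi, hDB, hDI, hX10]
    ring
  have hDDPsi2 : pd ℚ 0 (pd ℚ 0 (psiTwoComb Φ)) = (MvPowerSeries.X 1) * (MvPowerSeries.X 1) * (Φ) * (Φ) * ((1 - MvPowerSeries.X 1 * Φ)⁻¹) * ((1 - MvPowerSeries.X 1 * Φ)⁻¹) * ((1 - MvPowerSeries.X 1 * Φ)⁻¹) * ((1 - MvPowerSeries.X 1 * Φ)⁻¹) * (Φ⁻¹) * (MvPowerSeries.C (σ := Fin 2) (R := ℚ) (1/8))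
        + (7 : MvPowerSeries (Fin 2) ℚ) * (MvPowerSeries.X 1) * (MvPowerSeries.X 1) * (MvPowerSeries.X 1) * (Φ) * (Φ) * (Φ) * ((1 - MvPowerSeries.X 1 * Φ)⁻¹) * ((1 - MvPowerSeries.X 1 * Φ)⁻¹) * ((1 - MvPowerSeries.X 1 * Φ)⁻¹) * ((1 - MvPowerSeries.X 1 * Φ)⁻¹) * ((1 - MvPowerSeries.X 1 * Φ)⁻¹) * (Φ⁻¹) * (MvPowerSeries.C (σ := Fin 2) (R := ℚ) (1/8))
        + (4 : MvPowerSeries (Fin 2) ℚ) * (MvPowerSeries.X 1) * (MvPowerSeries.X 1) * (MvPowerSeries.X 1) * (Φ) * (Φ) * (Φ) * ((1 - MvPowerSeries.X 1 * Φ)⁻¹) * ((1 - MvPowerSeries.X 1 * Φ)⁻¹) * ((1 - MvPowerSeries.X 1 * Φ)⁻¹) * ((1 - MvPowerSeries.X 1 * Φ)⁻¹) * ((1 - MvPowerSeries.X 1 * Φ)⁻¹) * (Φ⁻¹) * (MvPowerSeries.C (σ := Fin 2) (R := ℚ) (5/24))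
        + (8 : MvPowerSeries (Fin 2) ℚ) * (MvPowerSeries.X 1) * (MvPowerSeries.X 1) * (MvPowerSeries.X 1) * (MvPowerSeries.X 1) * (Φ) * (Φ) * (Φ) * (Φ) * ((1 - MvPowerSeries.X 1 * Φ)⁻¹) * ((1 - MvPowerSeries.X 1 * Φ)⁻¹) * ((1 - MvPowerSeries.X 1 * Φ)⁻¹) * ((1 - MvPowerSeries.X 1 * Φ)⁻¹) * ((1 - MvPowerSeries.X 1 * Φ)⁻¹) * ((1 - MvPowerSeries.X 1 * Φ)⁻¹) * (Φ⁻¹) * (MvPowerSeries.C (σ := Fin 2) (R := ℚ) (1/8))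
        + (17 : MvPowerSeries (Fin 2) ℚ) * (MvPowerSeries.X 1) * (MvPowerSeries.X 1) * (MvPowerSeries.X 1) * (MvPowerSeries.X 1) * (Φ) * (Φ) * (Φ) * (Φ) * ((1 - MvPowerSeries.X 1 * Φ)⁻¹) * ((1 - MvPowerSeries.X 1 * Φ)⁻¹) * ((1 - MvPowerSeries.X 1 * Φ)⁻¹) * ((1 - MvPowerSeries.X 1 * Φ)⁻¹) * ((1 - MvPowerSeries.X 1 * Φ)⁻¹) * ((1 - MvPowerSeries.X 1 * Φ)⁻¹) * (Φ⁻¹) * (MvPowerSeries.C (σ := Fin 2) (R := ℚ) (5/24))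
        + (15 : MvPowerSeries (Fin 2) ℚ) * (MvPowerSeries.X 1) * (MvPowerSeries.X 1) * (MvPowerSeries.X 1) * (MvPowerSeries.X 1) * (MvPowerSeries.X 1) * (Φ) * (Φ) * (Φ) * (Φ) * (Φ) * ((1 - MvPowerSeries.X 1 * Φ)⁻¹) * ((1 - MvPowerSeries.X 1 * Φ)⁻¹) * ((1 - MvPowerSeries.X 1 * Φ)⁻¹) * ((1 - MvPowerSeries.X 1 * Φ)⁻¹) * ((1 - MvPowerSeries.X 1 * Φ)⁻¹) * ((1 - MvPowerSeries.X 1 * Φ)⁻¹) * ((1 - MvPowerSeries.X 1 * Φ)⁻¹) * (Φ⁻¹) * (MvPowerSeries.C (σ := Fin 2) (R := ℚ) (5/24)) := by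
    rw [hDPsi2]
    simp only [pd_add, pd_mul, pd_C, pd_ofNat, hDPhi, hDB, hDI, hX10]
    ring
  have hT : T = (MvPowerSeries.X 1) * (MvPowerSeries.X 1) * (MvPowerSeries.X 1) * (Φ) * (Φ) * (Φ) * ((1 - MvPowerSeries.X 1 * Φ)⁻¹) * ((1 - MvPowerSeries.X 1 * Φ)⁻¹) * ((1 - MvPowerSeries.X 1 * Φ)⁻¹) * (Φ⁻¹) * (Φ⁻¹) * (MvPowerSeries.C (σ := Fin 2) (R := ℚ) (1/48))
        + (MvPowerSeries.X 1) * (MvPowerSeries.X 1) * (MvPowerSeries.X 1) * (MvPowerSeries.X 1) * (Φ) * (Φ) * (Φ) * (Φ) * ((1 - MvPowerSeries.X 1 * Φ)⁻¹) * ((1 - MvPowerSeries.X 1 * Φ)⁻¹) * ((1 - MvPowerSeries.X 1 * Φ)⁻¹) * ((1 - MvPowerSeries.X 1 * Φ)⁻¹) * (Φ⁻¹) * (Φ⁻¹) * (MvPowerSeries.C (σ := Fin 2) (R := ℚ) (11/48))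
        + (MvPowerSeries.X 1) * (MvPowerSeries.X 1) * (MvPowerSeries.X 1) * (MvPowerSeries.X 1) * (MvPowerSeries.X 1) * (Φ) * (Φ) * (Φ) * (Φ) * (Φ) * ((1 - MvPowerSeries.X 1 * Φ)⁻¹) * ((1 - MvPowerSeries.X 1 * Φ)⁻¹) * ((1 - MvPowerSeries.X 1 * Φ)⁻¹) * ((1 - MvPowerSeries.X 1 * Φ)⁻¹) * ((1 - MvPowerSeries.X 1 * Φ)⁻¹) * (Φ⁻¹) * (Φ⁻¹) * (MvPowerSeries.C (σ := Fin 2) (R := ℚ) (25/48))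
        + (MvPowerSeries.X 1) * (MvPowerSeries.X 1) * (MvPowerSeries.X 1) * (MvPowerSeries.X 1) * (MvPowerSeries.X 1) * (MvPowerSeries.X 1) * (Φ) * (Φ) * (Φ) * (Φ) * (Φ) * (Φ) * ((1 - MvPowerSeries.X 1 * Φ)⁻¹) * ((1 - MvPowerSeries.X 1 * Φ)⁻¹) * ((1 - MvPowerSeries.X 1 * Φ)⁻¹) * ((1 - MvPowerSeries.X 1 * Φ)⁻¹) * ((1 - MvPowerSeries.X 1 * Φ)⁻¹) * ((1 - MvPowerSeries.X 1 * Φ)⁻¹) * (Φ⁻¹) * (Φ⁻¹) * (MvPowerSeries.C (σ := Fin 2) (R := ℚ) (5/16)) := by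
    rw [hTdef]
    unfold yComb
    ring
  have hDT : pd ℚ 0 T = (MvPowerSeries.X 1) * (MvPowerSeries.X 1) * (MvPowerSeries.X 1) * (Φ) * (Φ) * (Φ) * ((1 - MvPowerSeries.X 1 * Φ)⁻¹) * ((1 - MvPowerSeries.X 1 * Φ)⁻¹) * ((1 - MvPowerSeries.X 1 * Φ)⁻¹) * ((1 - MvPowerSeries.X 1 * Φ)⁻¹) * (Φ⁻¹) * (Φ⁻¹) * (MvPowerSeries.C (σ := Fin 2) (R := ℚ) (1/48))
        + (3 : MvPowerSeries (Fin 2) ℚ) * (MvPowerSeries.X 1) * (MvPowerSeries.X 1) * (MvPowerSeries.X 1) * (MvPowerSeries.X 1) * (Φ) * (Φ) * (Φ) * (Φ) * ((1 - MvPowerSeries.X 1 * Φ)⁻¹) * ((1 - MvPowerSeries.X 1 * Φ)⁻¹) * ((1 - MvPowerSeries.X 1 * Φ)⁻¹) * ((1 - MvPowerSeries.X 1 * Φ)⁻¹) * ((1 - MvPowerSeries.X 1 * Φ)⁻¹) * (Φ⁻¹) * (Φ⁻¹) * (MvPowerSeries.C (σ := Fin 2) (R := ℚ) (1/48))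
        + (2 : MvPowerSeries (Fin 2) ℚ) * (MvPowerSeries.X 1) * (MvPowerSeries.X 1) * (MvPowerSeries.X 1) * (MvPowerSeries.X 1) * (Φ) * (Φ) * (Φ) * (Φ) * ((1 - MvPowerSeries.X 1 * Φ)⁻¹) * ((1 - MvPowerSeries.X 1 * Φ)⁻¹) * ((1 - MvPowerSeries.X 1 * Φ)⁻¹) * ((1 - MvPowerSeries.X 1 * Φ)⁻¹) * ((1 - MvPowerSeries.X 1 * Φ)⁻¹) * (Φ⁻¹) * (Φ⁻¹) * (MvPowerSeries.C (σ := Fin 2) (R := ℚ) (11/48))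
        + (4 : MvPowerSeries (Fin 2) ℚ) * (MvPowerSeries.X 1) * (MvPowerSeries.X 1) * (MvPowerSeries.X 1) * (MvPowerSeries.X 1) * (MvPowerSeries.X 1) * (Φ) * (Φ) * (Φ) * (Φ) * (Φ) * ((1 - MvPowerSeries.X 1 * Φ)⁻¹) * ((1 - MvPowerSeries.X 1 * Φ)⁻¹) * ((1 - MvPowerSeries.X 1 * Φ)⁻¹) * ((1 - MvPowerSeries.X 1 * Φ)⁻¹) * ((1 - MvPowerSeries.X 1 * Φ)⁻¹) * ((1 - MvPowerSeries.X 1 * Φ)⁻¹) * (Φ⁻¹) * (Φ⁻¹) * (MvPowerSeries.C (σ := Fin 2) (R := ℚ) (11/48))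
        + (3 : MvPowerSeries (Fin 2) ℚ) * (MvPowerSeries.X 1) * (MvPowerSeries.X 1) * (MvPowerSeries.X 1) * (MvPowerSeries.X 1) * (MvPowerSeries.X 1) * (Φ) * (Φ) * (Φ) * (Φ) * (Φ) * ((1 - MvPowerSeries.X 1 * Φ)⁻¹) * ((1 - MvPowerSeries.X 1 * Φ)⁻¹) * ((1 - MvPowerSeries.X 1 * Φ)⁻¹) * ((1 - MvPowerSeries.X 1 * Φ)⁻¹) * ((1 - MvPowerSeries.X 1 * Φ)⁻¹) * ((1 - MvPowerSeries.X 1 * Φ)⁻¹) * (Φ⁻¹) * (Φ⁻¹) * (MvPowerSeries.C (σ := Fin 2) (R := ℚ) (25/48))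
        + (5 : MvPowerSeries (Fin 2) ℚ) * (MvPowerSeries.X 1) * (MvPowerSeries.X 1) * (MvPowerSeries.X 1) * (MvPowerSeries.X 1) * (MvPowerSeries.X 1) * (MvPowerSeries.X 1) * (Φ) * (Φ) * (Φ) * (Φ) * (Φ) * (Φ) * ((1 - MvPowerSeries.X 1 * Φ)⁻¹) * ((1 - MvPowerSeries.X 1 * Φ)⁻¹) * ((1 - MvPowerSeries.X 1 * Φ)⁻¹) * ((1 - MvPowerSeries.X 1 * Φ)⁻¹) * ((1 - MvPowerSeries.X 1 * Φ)⁻¹) * ((1 - MvPowerSeries.X 1 * Φ)⁻¹) * ((1 - MvPowerSeries.X 1 * Φ)⁻¹) * (Φ⁻¹) * (Φ⁻¹) * (MvPowerSeries.C (σ := Fin 2) (R := ℚ) (25/48))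
        + (4 : MvPowerSeries (Fin 2) ℚ) * (MvPowerSeries.X 1) * (MvPowerSeries.X 1) * (MvPowerSeries.X 1) * (MvPowerSeries.X 1) * (MvPowerSeries.X 1) * (MvPowerSeries.X 1) * (Φ) * (Φ) * (Φ) * (Φ) * (Φ) * (Φ) * ((1 - MvPowerSeries.X 1 * Φ)⁻¹) * ((1 - MvPowerSeries.X 1 * Φ)⁻¹) * ((1 - MvPowerSeries.X 1 * Φ)⁻¹) * ((1 - MvPowerSeries.X 1 * Φ)⁻¹) * ((1 - MvPowerSeries.X 1 * Φ)⁻¹) * ((1 - MvPowerSeries.X 1 * Φ)⁻¹) * ((1 - MvPowerSeries.X 1 * Φ)⁻¹) * (Φ⁻¹) * (Φ⁻¹) * (MvPowerSeries.C (σ := Fin 2) (R := ℚ) (5/16))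
        + (6 : MvPowerSeries (Fin 2) ℚ) * (MvPowerSeries.X 1) * (MvPowerSeries.X 1) * (MvPowerSeries.X 1) * (MvPowerSeries.X 1) * (MvPowerSeries.X 1) * (MvPowerSeries.X 1) * (MvPowerSeries.X 1) * (Φ) * (Φ) * (Φ) * (Φ) * (Φ) * (Φ) * (Φ) * ((1 - MvPowerSeries.X 1 * Φ)⁻¹) * ((1 - MvPowerSeries.X 1 * Φ)⁻¹) * ((1 - MvPowerSeries.X 1 * Φ)⁻¹) * ((1 - MvPowerSeries.X 1 * Φ)⁻¹) * ((1 - MvPowerSeries.X 1 * Φ)⁻¹) * ((1 - MvPowerSeries.X 1 * Φ)⁻¹) * ((1 - MvPowerSeries.X 1 * Φ)⁻¹) * ((1 - MvPowerSeries.X 1 * Φ)⁻¹) * (Φ⁻¹) * (Φ⁻¹) * (MvPowerSeries.C (σ := Fin 2) (R := ℚ) (5/16)) := by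
    rw [hT]
    simp only [pd_add, pd_mul, pd_C, pd_ofNat, hDPhi, hDB, hDI, hX10]
    ring
  have hST : pd ℚ 1 T = (3 : MvPowerSeries (Fin 2) ℚ) * (MvPowerSeries.X 1) * (MvPowerSeries.X 1) * (Φ) * (Φ) * (Φ) * ((1 - MvPowerSeries.X 1 * Φ)⁻¹) * ((1 - MvPowerSeries.X 1 * Φ)⁻¹) * ((1 - MvPowerSeries.X 1 * Φ)⁻¹) * (Φ⁻¹) * (Φ⁻¹) * (MvPowerSeries.C (σ := Fin 2) (R := ℚ) (1/48))
        + (-2 : MvPowerSeries (Fin 2) ℚ) * (MvPowerSeries.X 1) * (MvPowerSeries.X 1) * (MvPowerSeries.X 1) * (Φ) * (Φ) * (Φ) * ((1 - MvPowerSeries.X 1 * Φ)⁻¹) * ((1 - MvPowerSeries.X 1 * Φ)⁻¹) * ((1 - MvPowerSeries.X 1 * Φ)⁻¹) * ((1 - MvPowerSeries.X 1 * Φ)⁻¹) * (Φ⁻¹) * (MvPowerSeries.C (σ := Fin 2) (R := ℚ) (1/48))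
        + (3 : MvPowerSeries (Fin 2) ℚ) * (MvPowerSeries.X 1) * (MvPowerSeries.X 1) * (MvPowerSeries.X 1) * (Φ) * (Φ) * (Φ) * (Φ) * ((1 - MvPowerSeries.X 1 * Φ)⁻¹) * ((1 - MvPowerSeries.X 1 * Φ)⁻¹) * ((1 - MvPowerSeries.X 1 * Φ)⁻¹) * ((1 - MvPowerSeries.X 1 * Φ)⁻¹) * (Φ⁻¹) * (Φ⁻¹) * (MvPowerSeries.C (σ := Fin 2) (R := ℚ) (1/48))
        + (4 : MvPowerSeries (Fin 2) ℚ) * (MvPowerSeries.X 1) * (MvPowerSeries.X 1) * (MvPowerSeries.X 1) * (Φ) * (Φ) * (Φ) * (Φ) * ((1 - MvPowerSeries.X 1 * Φ)⁻¹) * ((1 - MvPowerSeries.X 1 * Φ)⁻¹) * ((1 - MvPowerSeries.X 1 * Φ)⁻¹) * ((1 - MvPowerSeries.X 1 * Φ)⁻¹) * (Φ⁻¹) * (Φ⁻¹) * (MvPowerSeries.C (σ := Fin 2) (R := ℚ) (11/48))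
        + (3 : MvPowerSeries (Fin 2) ℚ) * (MvPowerSeries.X 1) * (MvPowerSeries.X 1) * (MvPowerSeries.X 1) * (Φ) * (Φ) * (Φ) * (Φ) * ((1 - MvPowerSeries.X 1 * Φ)⁻¹) * ((1 - MvPowerSeries.X 1 * Φ)⁻¹) * ((1 - MvPowerSeries.X 1 * Φ)⁻¹) * ((1 - MvPowerSeries.X 1 * Φ)⁻¹) * ((1 - MvPowerSeries.X 1 * Φ)⁻¹) * (Φ⁻¹) * (Φ⁻¹) * (MvPowerSeries.C (σ := Fin 2) (R := ℚ) (1/48))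
        + (-2 : MvPowerSeries (Fin 2) ℚ) * (MvPowerSeries.X 1) * (MvPowerSeries.X 1) * (MvPowerSeries.X 1) * (MvPowerSeries.X 1) * (Φ) * (Φ) * (Φ) * (Φ) * ((1 - MvPowerSeries.X 1 * Φ)⁻¹) * ((1 - MvPowerSeries.X 1 * Φ)⁻¹) * ((1 - MvPowerSeries.X 1 * Φ)⁻¹) * ((1 - MvPowerSeries.X 1 * Φ)⁻¹) * ((1 - MvPowerSeries.X 1 * Φ)⁻¹) * (Φ⁻¹) * (MvPowerSeries.C (σ := Fin 2) (R := ℚ) (11/48))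
        + (4 : MvPowerSeries (Fin 2) ℚ) * (MvPowerSeries.X 1) * (MvPowerSeries.X 1) * (MvPowerSeries.X 1) * (MvPowerSeries.X 1) * (Φ) * (Φ) * (Φ) * (Φ) * (Φ) * ((1 - MvPowerSeries.X 1 * Φ)⁻¹) * ((1 - MvPowerSeries.X 1 * Φ)⁻¹) * ((1 - MvPowerSeries.X 1 * Φ)⁻¹) * ((1 - MvPowerSeries.X 1 * Φ)⁻¹) * ((1 - MvPowerSeries.X 1 * Φ)⁻¹) * (Φ⁻¹) * (Φ⁻¹) * (MvPowerSeries.C (σ := Fin 2) (R := ℚ) (11/48))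
        + (5 : MvPowerSeries (Fin 2) ℚ) * (MvPowerSeries.X 1) * (MvPowerSeries.X 1) * (MvPowerSeries.X 1) * (MvPowerSeries.X 1) * (Φ) * (Φ) * (Φ) * (Φ) * (Φ) * ((1 - MvPowerSeries.X 1 * Φ)⁻¹) * ((1 - MvPowerSeries.X 1 * Φ)⁻¹) * ((1 - MvPowerSeries.X 1 * Φ)⁻¹) * ((1 - MvPowerSeries.X 1 * Φ)⁻¹) * ((1 - MvPowerSeries.X 1 * Φ)⁻¹) * (Φ⁻¹) * (Φ⁻¹) * (MvPowerSeries.C (σ := Fin 2) (R := ℚ) (25/48))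
        + (4 : MvPowerSeries (Fin 2) ℚ) * (MvPowerSeries.X 1) * (MvPowerSeries.X 1) * (MvPowerSeries.X 1) * (MvPowerSeries.X 1) * (Φ) * (Φ) * (Φ) * (Φ) * (Φ) * ((1 - MvPowerSeries.X 1 * Φ)⁻¹) * ((1 - MvPowerSeries.X 1 * Φ)⁻¹) * ((1 - MvPowerSeries.X 1 * Φ)⁻¹) * ((1 - MvPowerSeries.X 1 * Φ)⁻¹) * ((1 - MvPowerSeries.X 1 * Φ)⁻¹) * ((1 - MvPowerSeries.X 1 * Φ)⁻¹) * (Φ⁻¹) * (Φ⁻¹) * (MvPowerSeries.C (σ := Fin 2) (R := ℚ) (11/48))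
        + (-2 : MvPowerSeries (Fin 2) ℚ) * (MvPowerSeries.X 1) * (MvPowerSeries.X 1) * (MvPowerSeries.X 1) * (MvPowerSeries.X 1) * (MvPowerSeries.X 1) * (Φ) * (Φ) * (Φ) * (Φ) * (Φ) * ((1 - MvPowerSeries.X 1 * Φ)⁻¹) * ((1 - MvPowerSeries.X 1 * Φ)⁻¹) * ((1 - MvPowerSeries.X 1 * Φ)⁻¹) * ((1 - MvPowerSeries.X 1 * Φ)⁻¹) * ((1 - MvPowerSeries.X 1 * Φ)⁻¹) * ((1 - MvPowerSeries.X 1 * Φ)⁻¹) * (Φ⁻¹) * (MvPowerSeries.C (σ := Fin 2) (R := ℚ) (25/48))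
        + (5 : MvPowerSeries (Fin 2) ℚ) * (MvPowerSeries.X 1) * (MvPowerSeries.X 1) * (MvPowerSeries.X 1) * (MvPowerSeries.X 1) * (MvPowerSeries.X 1) * (Φ) * (Φ) * (Φ) * (Φ) * (Φ) * (Φ) * ((1 - MvPowerSeries.X 1 * Φ)⁻¹) * ((1 - MvPowerSeries.X 1 * Φ)⁻¹) * ((1 - MvPowerSeries.X 1 * Φ)⁻¹) * ((1 - MvPowerSeries.X 1 * Φ)⁻¹) * ((1 - MvPowerSeries.X 1 * Φ)⁻¹) * ((1 - MvPowerSeries.X 1 * Φ)⁻¹) * (Φ⁻¹) * (Φ⁻¹) * (MvPowerSeries.C (σ := Fin 2) (R := ℚ) (25/48))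
        + (6 : MvPowerSeries (Fin 2) ℚ) * (MvPowerSeries.X 1) * (MvPowerSeries.X 1) * (MvPowerSeries.X 1) * (MvPowerSeries.X 1) * (MvPowerSeries.X 1) * (Φ) * (Φ) * (Φ) * (Φ) * (Φ) * (Φ) * ((1 - MvPowerSeries.X 1 * Φ)⁻¹) * ((1 - MvPowerSeries.X 1 * Φ)⁻¹) * ((1 - MvPowerSeries.X 1 * Φ)⁻¹) * ((1 - MvPowerSeries.X 1 * Φ)⁻¹) * ((1 - MvPowerSeries.X 1 * Φ)⁻¹) * ((1 - MvPowerSeries.X 1 * Φ)⁻¹) * (Φ⁻¹) * (Φ⁻¹) * (MvPowerSeries.C (σ := Fin 2) (R := ℚ) (5/16))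
        + (5 : MvPowerSeries (Fin 2) ℚ) * (MvPowerSeries.X 1) * (MvPowerSeries.X 1) * (MvPowerSeries.X 1) * (MvPowerSeries.X 1) * (MvPowerSeries.X 1) * (Φ) * (Φ) * (Φ) * (Φ) * (Φ) * (Φ) * ((1 - MvPowerSeries.X 1 * Φ)⁻¹) * ((1 - MvPowerSeries.X 1 * Φ)⁻¹) * ((1 - MvPowerSeries.X 1 * Φ)⁻¹) * ((1 - MvPowerSeries.X 1 * Φ)⁻¹) * ((1 - MvPowerSeries.X 1 * Φ)⁻¹) * ((1 - MvPowerSeries.X 1 * Φ)⁻¹) * ((1 - MvPowerSeries.X 1 * Φ)⁻¹) * (Φ⁻¹) * (Φ⁻¹) * (MvPowerSeries.C (σ := Fin 2) (R := ℚ) (25/48))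
        + (-2 : MvPowerSeries (Fin 2) ℚ) * (MvPowerSeries.X 1) * (MvPowerSeries.X 1) * (MvPowerSeries.X 1) * (MvPowerSeries.X 1) * (MvPowerSeries.X 1) * (MvPowerSeries.X 1) * (Φ) * (Φ) * (Φ) * (Φ) * (Φ) * (Φ) * ((1 - MvPowerSeries.X 1 * Φ)⁻¹) * ((1 - MvPowerSeries.X 1 * Φ)⁻¹) * ((1 - MvPowerSeries.X 1 * Φ)⁻¹) * ((1 - MvPowerSeries.X 1 * Φ)⁻¹) * ((1 - MvPowerSeries.X 1 * Φ)⁻¹) * ((1 - MvPowerSeries.X 1 * Φ)⁻¹) * ((1 - MvPowerSeries.X 1 * Φ)⁻¹) * (Φ⁻¹) * (MvPowerSeries.C (σ := Fin 2) (R := ℚ) (5/16))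
        + (6 : MvPowerSeries (Fin 2) ℚ) * (MvPowerSeries.X 1) * (MvPowerSeries.X 1) * (MvPowerSeries.X 1) * (MvPowerSeries.X 1) * (MvPowerSeries.X 1) * (MvPowerSeries.X 1) * (Φ) * (Φ) * (Φ) * (Φ) * (Φ) * (Φ) * (Φ) * ((1 - MvPowerSeries.X 1 * Φ)⁻¹) * ((1 - MvPowerSeries.X 1 * Φ)⁻¹) * ((1 - MvPowerSeries.X 1 * Φ)⁻¹) * ((1 - MvPowerSeries.X 1 * Φ)⁻¹) * ((1 - MvPowerSeries.X 1 * Φ)⁻¹) * ((1 - MvPowerSeries.X 1 * Φ)⁻¹) * ((1 - MvPowerSeries.X 1 * Φ)⁻¹) * (Φ⁻¹) * (Φ⁻¹) * (MvPowerSeries.C (σ := Fin 2) (R := ℚ) (5/16))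
        + (6 : MvPowerSeries (Fin 2) ℚ) * (MvPowerSeries.X 1) * (MvPowerSeries.X 1) * (MvPowerSeries.X 1) * (MvPowerSeries.X 1) * (MvPowerSeries.X 1) * (MvPowerSeries.X 1) * (Φ) * (Φ) * (Φ) * (Φ) * (Φ) * (Φ) * (Φ) * ((1 - MvPowerSeries.X 1 * Φ)⁻¹) * ((1 - MvPowerSeries.X 1 * Φ)⁻¹) * ((1 - MvPowerSeries.X 1 * Φ)⁻¹) * ((1 - MvPowerSeries.X 1 * Φ)⁻¹) * ((1 - MvPowerSeries.X 1 * Φ)⁻¹) * ((1 - MvPowerSeries.X 1 * Φ)⁻¹) * ((1 - MvPowerSeries.X 1 * Φ)⁻¹) * ((1 - MvPowerSeries.X 1 * Φ)⁻¹) * (Φ⁻¹) * (Φ⁻¹) * (MvPowerSeries.C (σ := Fin 2) (R := ℚ) (5/16)) := by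
    rw [hT]
    simp only [pd_add, pd_mul, pd_C, pd_ofNat, hSPhi, hSB, hSI, pd_X_self]
    ring
  -- the candidate solves the same PDE
  have key : pd ℚ 1 T = (2 : ℚ)⁻¹ •
      (pd ℚ 0 (pd ℚ 0 (psiTwoComb Φ)) + 2 * Φ * pd ℚ 0 T +
        2 * pd ℚ 0 (psiOneComb Φ) * pd ℚ 0 (psiTwoComb Φ)) := by
    rw [hST, hDDPsi2, hDT, hDPsi1, hDPsi2, MvPowerSeries.smul_eq_C_mul]
    have cancel : ∀ x y : MvPowerSeries (Fin 2) ℚ,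
        (48 : MvPowerSeries (Fin 2) ℚ) * x = 48 * y → x = y := by
      intro x y h
      have h48 : ∀ z : MvPowerSeries (Fin 2) ℚ, (48 : ℚ) • z = 48 * z := by
        intro z
        rw [MvPowerSeries.smul_eq_C_mul, map_ofNat]
      have h2 : (48 : ℚ) • x = (48 : ℚ) • y := by rw [h48, h48, h]
      have h3 := congrArg (fun z => ((48 : ℚ))⁻¹ • z) h2
      simpa [smul_smul, (by norm_num : ((48:ℚ))⁻¹ * 48 = 1)] using h3
    apply cancel
    linear_combination (norm := ring1)
      ((3 : MvPowerSeries (Fin 2) ℚ) * (MvPowerSeries.X 1)^2 * (Φ) * ((1 - MvPowerSeries.X 1 * Φ)⁻¹)^3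
        + (-3 : MvPowerSeries (Fin 2) ℚ) * (MvPowerSeries.X 1)^2 * (Φ) * ((1 - MvPowerSeries.X 1 * Φ)⁻¹)^4
        + (3 : MvPowerSeries (Fin 2) ℚ) * (MvPowerSeries.X 1)^2 * (Φ)^2 * ((1 - MvPowerSeries.X 1 * Φ)⁻¹)^3 * (Φ⁻¹)
        + (44 : MvPowerSeries (Fin 2) ℚ) * (MvPowerSeries.X 1)^3 * (Φ)^2 * ((1 - MvPowerSeries.X 1 * Φ)⁻¹)^4
        + (-41 : MvPowerSeries (Fin 2) ℚ) * (MvPowerSeries.X 1)^3 * (Φ)^2 * ((1 - MvPowerSeries.X 1 * Φ)⁻¹)^5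
        + (46 : MvPowerSeries (Fin 2) ℚ) * (MvPowerSeries.X 1)^3 * (Φ)^3 * ((1 - MvPowerSeries.X 1 * Φ)⁻¹)^4 * (Φ⁻¹)
        + (3 : MvPowerSeries (Fin 2) ℚ) * (MvPowerSeries.X 1)^3 * (Φ)^3 * ((1 - MvPowerSeries.X 1 * Φ)⁻¹)^5 * (Φ⁻¹)
        + (122 : MvPowerSeries (Fin 2) ℚ) * (MvPowerSeries.X 1)^4 * (Φ)^3 * ((1 - MvPowerSeries.X 1 * Φ)⁻¹)^5
        + (-81 : MvPowerSeries (Fin 2) ℚ) * (MvPowerSeries.X 1)^4 * (Φ)^3 * ((1 - MvPowerSeries.X 1 * Φ)⁻¹)^6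
        + (144 : MvPowerSeries (Fin 2) ℚ) * (MvPowerSeries.X 1)^4 * (Φ)^4 * ((1 - MvPowerSeries.X 1 * Φ)⁻¹)^5 * (Φ⁻¹)
        + (44 : MvPowerSeries (Fin 2) ℚ) * (MvPowerSeries.X 1)^4 * (Φ)^4 * ((1 - MvPowerSeries.X 1 * Φ)⁻¹)^6 * (Φ⁻¹)
        + (46 : MvPowerSeries (Fin 2) ℚ) * (MvPowerSeries.X 1)^5 * (Φ)^4 * ((1 - MvPowerSeries.X 1 * Φ)⁻¹)^6
        + (35 : MvPowerSeries (Fin 2) ℚ) * (MvPowerSeries.X 1)^5 * (Φ)^4 * ((1 - MvPowerSeries.X 1 * Φ)⁻¹)^7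
        + (96 : MvPowerSeries (Fin 2) ℚ) * (MvPowerSeries.X 1)^5 * (Φ)^5 * ((1 - MvPowerSeries.X 1 * Φ)⁻¹)^6 * (Φ⁻¹)
        + (125 : MvPowerSeries (Fin 2) ℚ) * (MvPowerSeries.X 1)^5 * (Φ)^5 * ((1 - MvPowerSeries.X 1 * Φ)⁻¹)^7 * (Φ⁻¹)
        + (-125 : MvPowerSeries (Fin 2) ℚ) * (MvPowerSeries.X 1)^6 * (Φ)^5 * ((1 - MvPowerSeries.X 1 * Φ)⁻¹)^7
        + (90 : MvPowerSeries (Fin 2) ℚ) * (MvPowerSeries.X 1)^6 * (Φ)^5 * ((1 - MvPowerSeries.X 1 * Φ)⁻¹)^8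
        + (-95 : MvPowerSeries (Fin 2) ℚ) * (MvPowerSeries.X 1)^6 * (Φ)^6 * ((1 - MvPowerSeries.X 1 * Φ)⁻¹)^7 * (Φ⁻¹)
        + (90 : MvPowerSeries (Fin 2) ℚ) * (MvPowerSeries.X 1)^6 * (Φ)^6 * ((1 - MvPowerSeries.X 1 * Φ)⁻¹)^8 * (Φ⁻¹)
        + (-90 : MvPowerSeries (Fin 2) ℚ) * (MvPowerSeries.X 1)^7 * (Φ)^6 * ((1 - MvPowerSeries.X 1 * Φ)⁻¹)^8
        + (-90 : MvPowerSeries (Fin 2) ℚ) * (MvPowerSeries.X 1)^7 * (Φ)^7 * ((1 - MvPowerSeries.X 1 * Φ)⁻¹)^8 * (Φ⁻¹)) * hAI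
      + ((-3 : MvPowerSeries (Fin 2) ℚ) * (MvPowerSeries.X 1)^2 * (Φ) * ((1 - MvPowerSeries.X 1 * Φ)⁻¹)^3
        + (-41 : MvPowerSeries (Fin 2) ℚ) * (MvPowerSeries.X 1)^3 * (Φ)^2 * ((1 - MvPowerSeries.X 1 * Φ)⁻¹)^4
        + (-81 : MvPowerSeries (Fin 2) ℚ) * (MvPowerSeries.X 1)^4 * (Φ)^3 * ((1 - MvPowerSeries.X 1 * Φ)⁻¹)^5
        + (35 : MvPowerSeries (Fin 2) ℚ) * (MvPowerSeries.X 1)^5 * (Φ)^4 * ((1 - MvPowerSeries.X 1 * Φ)⁻¹)^6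
        + (90 : MvPowerSeries (Fin 2) ℚ) * (MvPowerSeries.X 1)^6 * (Φ)^5 * ((1 - MvPowerSeries.X 1 * Φ)⁻¹)^7) * hBB
      + ((-3 : MvPowerSeries (Fin 2) ℚ) * (MvPowerSeries.X 1)^2 * (Φ)^2 * ((1 - MvPowerSeries.X 1 * Φ)⁻¹)^4 * (Φ⁻¹)
        + (-44 : MvPowerSeries (Fin 2) ℚ) * (MvPowerSeries.X 1)^3 * (Φ)^3 * ((1 - MvPowerSeries.X 1 * Φ)⁻¹)^5 * (Φ⁻¹)
        + (-6 : MvPowerSeries (Fin 2) ℚ) * (MvPowerSeries.X 1)^3 * (Φ)^3 * ((1 - MvPowerSeries.X 1 * Φ)⁻¹)^5 * (Φ⁻¹) * (MvPowerSeries.C (σ := Fin 2) (R := ℚ) 2⁻¹)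
        + (-1 : MvPowerSeries (Fin 2) ℚ) * (MvPowerSeries.X 1)^3 * (Φ)^4 * ((1 - MvPowerSeries.X 1 * Φ)⁻¹)^4 * (Φ⁻¹)^2
        + (-125 : MvPowerSeries (Fin 2) ℚ) * (MvPowerSeries.X 1)^4 * (Φ)^4 * ((1 - MvPowerSeries.X 1 * Φ)⁻¹)^6 * (Φ⁻¹)
        + (-32 : MvPowerSeries (Fin 2) ℚ) * (MvPowerSeries.X 1)^4 * (Φ)^4 * ((1 - MvPowerSeries.X 1 * Φ)⁻¹)^6 * (Φ⁻¹) * (MvPowerSeries.C (σ := Fin 2) (R := ℚ) 2⁻¹)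
        + (-25 : MvPowerSeries (Fin 2) ℚ) * (MvPowerSeries.X 1)^4 * (Φ)^5 * ((1 - MvPowerSeries.X 1 * Φ)⁻¹)^5 * (Φ⁻¹)^2
        + (-90 : MvPowerSeries (Fin 2) ℚ) * (MvPowerSeries.X 1)^5 * (Φ)^5 * ((1 - MvPowerSeries.X 1 * Φ)⁻¹)^7 * (Φ⁻¹)
        + (-30 : MvPowerSeries (Fin 2) ℚ) * (MvPowerSeries.X 1)^5 * (Φ)^5 * ((1 - MvPowerSeries.X 1 * Φ)⁻¹)^7 * (Φ⁻¹) * (MvPowerSeries.C (σ := Fin 2) (R := ℚ) 2⁻¹)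
        + (-119 : MvPowerSeries (Fin 2) ℚ) * (MvPowerSeries.X 1)^5 * (Φ)^6 * ((1 - MvPowerSeries.X 1 * Φ)⁻¹)^6 * (Φ⁻¹)^2
        + (-185 : MvPowerSeries (Fin 2) ℚ) * (MvPowerSeries.X 1)^6 * (Φ)^7 * ((1 - MvPowerSeries.X 1 * Φ)⁻¹)^7 * (Φ⁻¹)^2
        + (-90 : MvPowerSeries (Fin 2) ℚ) * (MvPowerSeries.X 1)^7 * (Φ)^8 * ((1 - MvPowerSeries.X 1 * Φ)⁻¹)^8 * (Φ⁻¹)^2) * hc7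
      + ((-8 : MvPowerSeries (Fin 2) ℚ) * (MvPowerSeries.X 1)^3 * (Φ)^3 * ((1 - MvPowerSeries.X 1 * Φ)⁻¹)^5 * (Φ⁻¹) * (MvPowerSeries.C (σ := Fin 2) (R := ℚ) 2⁻¹)
        + (-34 : MvPowerSeries (Fin 2) ℚ) * (MvPowerSeries.X 1)^4 * (Φ)^4 * ((1 - MvPowerSeries.X 1 * Φ)⁻¹)^6 * (Φ⁻¹) * (MvPowerSeries.C (σ := Fin 2) (R := ℚ) 2⁻¹)
        + (-8 : MvPowerSeries (Fin 2) ℚ) * (MvPowerSeries.X 1)^4 * (Φ)^4 * ((1 - MvPowerSeries.X 1 * Φ)⁻¹)^6 * (Φ⁻¹) * (MvPowerSeries.C (σ := Fin 2) (R := ℚ) 2⁻¹)^2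
        + (-30 : MvPowerSeries (Fin 2) ℚ) * (MvPowerSeries.X 1)^5 * (Φ)^5 * ((1 - MvPowerSeries.X 1 * Φ)⁻¹)^7 * (Φ⁻¹) * (MvPowerSeries.C (σ := Fin 2) (R := ℚ) 2⁻¹)
        + (-12 : MvPowerSeries (Fin 2) ℚ) * (MvPowerSeries.X 1)^5 * (Φ)^5 * ((1 - MvPowerSeries.X 1 * Φ)⁻¹)^7 * (Φ⁻¹) * (MvPowerSeries.C (σ := Fin 2) (R := ℚ) 2⁻¹)^2) * hc2
      + ((-6 : MvPowerSeries (Fin 2) ℚ) * (MvPowerSeries.X 1)^2 * (Φ)^2 * ((1 - MvPowerSeries.X 1 * Φ)⁻¹)^4 * (Φ⁻¹) * (MvPowerSeries.C (σ := Fin 2) (R := ℚ) 2⁻¹)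
        + (-42 : MvPowerSeries (Fin 2) ℚ) * (MvPowerSeries.X 1)^3 * (Φ)^3 * ((1 - MvPowerSeries.X 1 * Φ)⁻¹)^5 * (Φ⁻¹) * (MvPowerSeries.C (σ := Fin 2) (R := ℚ) 2⁻¹)
        + (-12 : MvPowerSeries (Fin 2) ℚ) * (MvPowerSeries.X 1)^3 * (Φ)^3 * ((1 - MvPowerSeries.X 1 * Φ)⁻¹)^5 * (Φ⁻¹) * (MvPowerSeries.C (σ := Fin 2) (R := ℚ) 2⁻¹)^2
        + (-48 : MvPowerSeries (Fin 2) ℚ) * (MvPowerSeries.X 1)^4 * (Φ)^4 * ((1 - MvPowerSeries.X 1 * Φ)⁻¹)^6 * (Φ⁻¹) * (MvPowerSeries.C (σ := Fin 2) (R := ℚ) 2⁻¹)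
        + (-24 : MvPowerSeries (Fin 2) ℚ) * (MvPowerSeries.X 1)^4 * (Φ)^4 * ((1 - MvPowerSeries.X 1 * Φ)⁻¹)^6 * (Φ⁻¹) * (MvPowerSeries.C (σ := Fin 2) (R := ℚ) 2⁻¹)^2) * hc3
      + ((18 : MvPowerSeries (Fin 2) ℚ) * (MvPowerSeries.X 1)^5 * (Φ)^6 * ((1 - MvPowerSeries.X 1 * Φ)⁻¹)^6 * (Φ⁻¹)^2
        + (-6 : MvPowerSeries (Fin 2) ℚ) * (MvPowerSeries.X 1)^6 * (Φ)^6 * ((1 - MvPowerSeries.X 1 * Φ)⁻¹)^7 * (Φ⁻¹)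
        + (18 : MvPowerSeries (Fin 2) ℚ) * (MvPowerSeries.X 1)^6 * (Φ)^7 * ((1 - MvPowerSeries.X 1 * Φ)⁻¹)^7 * (Φ⁻¹)^2
        + (-24 : MvPowerSeries (Fin 2) ℚ) * (MvPowerSeries.X 1)^6 * (Φ)^7 * ((1 - MvPowerSeries.X 1 * Φ)⁻¹)^7 * (Φ⁻¹)^2 * (MvPowerSeries.C (σ := Fin 2) (R := ℚ) 2⁻¹)
        + (18 : MvPowerSeries (Fin 2) ℚ) * (MvPowerSeries.X 1)^6 * (Φ)^7 * ((1 - MvPowerSeries.X 1 * Φ)⁻¹)^8 * (Φ⁻¹)^2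
        + (-36 : MvPowerSeries (Fin 2) ℚ) * (MvPowerSeries.X 1)^7 * (Φ)^8 * ((1 - MvPowerSeries.X 1 * Φ)⁻¹)^8 * (Φ⁻¹)^2 * (MvPowerSeries.C (σ := Fin 2) (R := ℚ) 2⁻¹)) * hc4
      + ((5 : MvPowerSeries (Fin 2) ℚ) * (MvPowerSeries.X 1)^4 * (Φ)^5 * ((1 - MvPowerSeries.X 1 * Φ)⁻¹)^5 * (Φ⁻¹)^2
        + (-2 : MvPowerSeries (Fin 2) ℚ) * (MvPowerSeries.X 1)^5 * (Φ)^5 * ((1 - MvPowerSeries.X 1 * Φ)⁻¹)^6 * (Φ⁻¹)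
        + (5 : MvPowerSeries (Fin 2) ℚ) * (MvPowerSeries.X 1)^5 * (Φ)^6 * ((1 - MvPowerSeries.X 1 * Φ)⁻¹)^6 * (Φ⁻¹)^2
        + (-6 : MvPowerSeries (Fin 2) ℚ) * (MvPowerSeries.X 1)^5 * (Φ)^6 * ((1 - MvPowerSeries.X 1 * Φ)⁻¹)^6 * (Φ⁻¹)^2 * (MvPowerSeries.C (σ := Fin 2) (R := ℚ) 2⁻¹)
        + (5 : MvPowerSeries (Fin 2) ℚ) * (MvPowerSeries.X 1)^5 * (Φ)^6 * ((1 - MvPowerSeries.X 1 * Φ)⁻¹)^7 * (Φ⁻¹)^2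
        + (-10 : MvPowerSeries (Fin 2) ℚ) * (MvPowerSeries.X 1)^6 * (Φ)^7 * ((1 - MvPowerSeries.X 1 * Φ)⁻¹)^7 * (Φ⁻¹)^2 * (MvPowerSeries.C (σ := Fin 2) (R := ℚ) 2⁻¹)) * hc5
      + ((4 : MvPowerSeries (Fin 2) ℚ) * (MvPowerSeries.X 1)^3 * (Φ)^4 * ((1 - MvPowerSeries.X 1 * Φ)⁻¹)^4 * (Φ⁻¹)^2
        + (-2 : MvPowerSeries (Fin 2) ℚ) * (MvPowerSeries.X 1)^4 * (Φ)^4 * ((1 - MvPowerSeries.X 1 * Φ)⁻¹)^5 * (Φ⁻¹)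
        + (4 : MvPowerSeries (Fin 2) ℚ) * (MvPowerSeries.X 1)^4 * (Φ)^5 * ((1 - MvPowerSeries.X 1 * Φ)⁻¹)^5 * (Φ⁻¹)^2
        + (-4 : MvPowerSeries (Fin 2) ℚ) * (MvPowerSeries.X 1)^4 * (Φ)^5 * ((1 - MvPowerSeries.X 1 * Φ)⁻¹)^5 * (Φ⁻¹)^2 * (MvPowerSeries.C (σ := Fin 2) (R := ℚ) 2⁻¹)
        + (4 : MvPowerSeries (Fin 2) ℚ) * (MvPowerSeries.X 1)^4 * (Φ)^5 * ((1 - MvPowerSeries.X 1 * Φ)⁻¹)^6 * (Φ⁻¹)^2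
        + (-8 : MvPowerSeries (Fin 2) ℚ) * (MvPowerSeries.X 1)^5 * (Φ)^6 * ((1 - MvPowerSeries.X 1 * Φ)⁻¹)^6 * (Φ⁻¹)^2 * (MvPowerSeries.C (σ := Fin 2) (R := ℚ) 2⁻¹)) * hc6
      + ((3 : MvPowerSeries (Fin 2) ℚ) * (MvPowerSeries.X 1)^2 * (Φ)^3 * ((1 - MvPowerSeries.X 1 * Φ)⁻¹)^3 * (Φ⁻¹)^2
        + (-2 : MvPowerSeries (Fin 2) ℚ) * (MvPowerSeries.X 1)^3 * (Φ)^3 * ((1 - MvPowerSeries.X 1 * Φ)⁻¹)^4 * (Φ⁻¹)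
        + (3 : MvPowerSeries (Fin 2) ℚ) * (MvPowerSeries.X 1)^3 * (Φ)^4 * ((1 - MvPowerSeries.X 1 * Φ)⁻¹)^4 * (Φ⁻¹)^2
        + (-2 : MvPowerSeries (Fin 2) ℚ) * (MvPowerSeries.X 1)^3 * (Φ)^4 * ((1 - MvPowerSeries.X 1 * Φ)⁻¹)^4 * (Φ⁻¹)^2 * (MvPowerSeries.C (σ := Fin 2) (R := ℚ) 2⁻¹)
        + (3 : MvPowerSeries (Fin 2) ℚ) * (MvPowerSeries.X 1)^3 * (Φ)^4 * ((1 - MvPowerSeries.X 1 * Φ)⁻¹)^5 * (Φ⁻¹)^2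
        + (-6 : MvPowerSeries (Fin 2) ℚ) * (MvPowerSeries.X 1)^4 * (Φ)^5 * ((1 - MvPowerSeries.X 1 * Φ)⁻¹)^5 * (Φ⁻¹)^2 * (MvPowerSeries.C (σ := Fin 2) (R := ℚ) 2⁻¹)) * hc8
  -- uniqueness: the difference satisfies a first-order recursion
  have hE : pd ℚ 1 (Ψ₃ - T) = Φ * pd ℚ 0 (Ψ₃ - T) := by
    rw [pd_sub, pd_sub, heq, key, ← smul_sub]
    have hx : (pd ℚ 0 (pd ℚ 0 (psiTwoComb Φ)) + 2 * Φ * pd ℚ 0 Ψ₃ +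
        2 * pd ℚ 0 (psiOneComb Φ) * pd ℚ 0 (psiTwoComb Φ)) -
        (pd ℚ 0 (pd ℚ 0 (psiTwoComb Φ)) + 2 * Φ * pd ℚ 0 T +
        2 * pd ℚ 0 (psiOneComb Φ) * pd ℚ 0 (psiTwoComb Φ))
        = 2 * (Φ * (pd ℚ 0 Ψ₃ - pd ℚ 0 T)) := by ring
    rw [hx, MvPowerSeries.smul_eq_C_mul]
    linear_combination (Φ * (pd ℚ 0 Ψ₃ - pd ℚ 0 T)) * hc7
  have hTX : T = MvPowerSeries.X 1 * ((Φ⁻¹)^2 * (Φ * (1 - MvPowerSeries.X 1 * Φ)⁻¹ *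
      (MvPowerSeries.C (σ := Fin 2) (R := ℚ) (5 / 16) * (yComb Φ) ^ 5 +
       MvPowerSeries.C (σ := Fin 2) (R := ℚ) (25 / 48) * (yComb Φ) ^ 4 +
       MvPowerSeries.C (σ := Fin 2) (R := ℚ) (11 / 48) * (yComb Φ) ^ 3 +
       MvPowerSeries.C (σ := Fin 2) (R := ℚ) (1 / 48) * (yComb Φ) ^ 2))) := by
    rw [hTdef]
    unfold yComb
    ring
  have main : ∀ b : ℕ, ∀ m : Fin 2 →₀ ℕ, m 1 ≤ b →
      MvPowerSeries.coeff (R := ℚ) m (Ψ₃ - T) = 0 := by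
    intro b
    induction b with
    | zero =>
      intro m hm
      have hm1 : m 1 = 0 := by omega
      have hmeq : m = Finsupp.single 0 (m 0) := by
        ext j
        fin_cases j
        · simp
        · simp [Finsupp.single_apply, hm1]
      rw [map_sub]
      have h3 : MvPowerSeries.coeff (R := ℚ) m Ψ₃ = 0 := by
        conv_lhs => rw [hmeq]
        exact hinit (m 0)
      have h4 : MvPowerSeries.coeff (R := ℚ) m T = 0 := by
        rw [hTX]
        exact coeff_X1_mul hm1
      rw [h3, h4, sub_zero]
    | succ b ih =>
      intro m hm
      rcases Nat.lt_or_ge (m 1) (b + 1) with h | h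
      · exact ih m (by omega)
      · have hm1 : m 1 = b + 1 := by omega
        set m' := m - Finsupp.single 1 1 with hm'def
        have hle : Finsupp.single 1 1 ≤ m := by
          rw [Finsupp.single_le_iff]
          omega
        have hm'add : m' + Finsupp.single 1 1 = m := tsub_add_cancel_of_le hle
        have hm'1 : m' 1 = b := by
          rw [hm'def]
          simp only [Finsupp.tsub_apply, Finsupp.single_eq_same]
          omega
        have h1 := congrArg (MvPowerSeries.coeff (R := ℚ) m') hE
        rw [coeff_pd, MvPowerSeries.coeff_mul] at h1
        have h2 : ∀ p ∈ Finset.HasAntidiagonal.antidiagonal m',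
            MvPowerSeries.coeff (R := ℚ) p.1 Φ * MvPowerSeries.coeff (R := ℚ) p.2 (pd ℚ 0 (Ψ₃ - T)) = 0 := by
          rintro ⟨a, c⟩ hac
          rw [Finset.HasAntidiagonal.mem_antidiagonal] at hac
          rw [coeff_pd]
          have hc1 : (c + Finsupp.single 0 1 : Fin 2 →₀ ℕ) 1 ≤ b := by
            have hca := DFunLike.congr_fun hac 1
            simp only [Finsupp.add_apply, Finsupp.single_apply] at hca ⊢
            rw [if_neg (by decide : ¬ (0 : Fin 2) = 1)]
            omega
          rw [ih _ hc1, mul_zero, mul_zero]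
        rw [Finset.sum_eq_zero h2, hm'add] at h1
        have hne : ((m' 1 + 1 : ℕ) : ℚ) ≠ 0 := by positivity
        exact (mul_eq_zero.mp h1).resolve_left hne
  have hzero : Ψ₃ - T = 0 := by
    ext m
    rw [map_zero]
    exact main (m 1) m le_rfl
  exact sub_eq_zero.mp hzero
end

section
/- Let Φ ∈ ℚ[[x,s]] be the unique formal power series with exp(x + sΦ) = 1 + x + (s+1)·Φ. Suppose Ψ₁ ∈ ℚ[[x,s]] satisfies ∂Ψ₁/∂s = (1/2)·( ∂Φ/∂x + 2Φ·∂Ψ₁/∂x ) with initial condition Ψ₁|_{s=0} = 0. Then Ψ₁ = −(1/2)·log( 1 − s·( x + (s+1)·Φ ) ), where log(1−u) := −Σ_{k≥1} u^k/k (well defined since s·(x + (s+1)Φ) has zero constant coefficient). -/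
set_option linter.unusedSectionVars false

open MvPowerSeries Finset Finsupp

section Basic
variable {σ : Type*} [DecidableEq σ] {R : Type*} [CommRing R]

theorem coeff_pd (i : σ) (f : MvPowerSeries σ R) (m : σ →₀ ℕ) :
    coeff (R := R) m (pd R i f) = ((m i + 1 : ℕ) : R) * coeff (R := R) (m + Finsupp.single i 1) f := rfl

theorem pd_add (i : σ) (f g : MvPowerSeries σ R) :
    pd R i (f + g) = pd R i f + pd R i g := by
  ext m
  simp [coeff_pd, map_add, mul_add]

theorem pd_one (i : σ) : pd R i (1 : MvPowerSeries σ R) = 0 := by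
  ext m
  have : m + Finsupp.single i 1 ≠ 0 := by
    intro h
    have := DFunLike.congr_fun h i
    simp at this
  simp [coeff_pd, coeff_one, this]

theorem pd_X_self (i : σ) : pd R i (X i : MvPowerSeries σ R) = 1 := by
  ext m
  rw [coeff_pd, coeff_X, coeff_one]
  by_cases h : m = 0
  · subst h; simp
  · rw [if_neg, if_neg h, mul_zero]
    intro hc
    apply h
    have : m + Finsupp.single i 1 = 0 + Finsupp.single i 1 := by simpa using hc
    exact add_right_cancel this

theorem pd_X_ne (i j : σ) (h : i ≠ j) : pd R i (X j : MvPowerSeries σ R) = 0 := by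
  ext m
  rw [coeff_pd, coeff_X, if_neg, mul_zero, map_zero]
  intro hc
  have := DFunLike.congr_fun hc i
  simp [Finsupp.single_eq_of_ne (Ne.symm h), h] at this

/-- Key reindexing lemma for Leibniz. -/
theorem sum_antidiag_shift (i : σ) (m : σ →₀ ℕ) (h : (σ →₀ ℕ) → (σ →₀ ℕ) → R) :
    ∑ p ∈ antidiagonal (m + Finsupp.single i 1), (((p : (σ →₀ ℕ) × (σ →₀ ℕ)).1 i : ℕ) : R) * h p.1 p.2
      = ∑ q ∈ antidiagonal m, (((q : (σ →₀ ℕ) × (σ →₀ ℕ)).1 i + 1 : ℕ) : R) * h (q.1 + Finsupp.single i 1) q.2 := by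
  symm
  refine Finset.sum_bij_ne_zero
    (i := fun (q : (σ →₀ ℕ) × (σ →₀ ℕ)) _ _ => (q.1 + Finsupp.single i 1, q.2)) ?_ ?_ ?_ ?_
  · intro q hq _
    rw [Finset.HasAntidiagonal.mem_antidiagonal] at hq ⊢
    simp only
    rw [← hq]; abel
  · intro q₁ _ _ q₂ _ _ hq
    rw [Prod.mk.injEq] at hq
    exact Prod.ext (add_right_cancel hq.1) hq.2
  · intro p hp hpne
    have hpi : p.1 i ≠ 0 := by
      intro h0; apply hpne; rw [h0]; simp
    have hle : Finsupp.single i 1 ≤ p.1 := Finsupp.single_le_iff.mpr (by omega)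
    have hc : p.1 - Finsupp.single i 1 + Finsupp.single i 1 = p.1 := tsub_add_cancel_of_le hle
    refine ⟨(p.1 - Finsupp.single i 1, p.2), ?_, ?_, ?_⟩
    · rw [Finset.HasAntidiagonal.mem_antidiagonal] at hp ⊢
      simp only
      have : p.1 - Finsupp.single i 1 + p.2 + Finsupp.single i 1 = m + Finsupp.single i 1 := by
        rw [add_right_comm, hc, hp]
      exact add_right_cancel this
    · have hval : ((p.1 - Finsupp.single i 1 : σ →₀ ℕ)) i + 1 = p.1 i := by
        rw [Finsupp.tsub_apply, Finsupp.single_eq_same]; omega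
      simpa only [hval, hc] using hpne
    · simp only [hc]
  · intro q _ _
    have : ((q.1 + Finsupp.single i 1 : σ →₀ ℕ)) i = q.1 i + 1 := by
      rw [Finsupp.add_apply, Finsupp.single_eq_same]
    rw [this]

theorem sum_antidiagonal_swap' (m : σ →₀ ℕ) (h : (σ →₀ ℕ) → (σ →₀ ℕ) → R) :
    ∑ p ∈ antidiagonal m, h p.1 p.2 = ∑ p ∈ antidiagonal m, h p.2 p.1 := by
  apply Finset.sum_nbij' (fun p => Prod.swap p) (fun p => Prod.swap p) <;>
    simp [Finset.HasAntidiagonal.mem_antidiagonal, add_comm]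

theorem pd_mul (i : σ) (f g : MvPowerSeries σ R) :
    pd R i (f * g) = pd R i f * g + f * pd R i g := by
  ext m
  rw [map_add, coeff_pd, coeff_mul, coeff_mul, coeff_mul, Finset.mul_sum]
  have hsplit : ∀ p ∈ antidiagonal (m + Finsupp.single i 1),
      ((m i + 1 : ℕ) : R) * (coeff (R := R) p.1 f * coeff (R := R) p.2 g)
        = (((p : (σ →₀ ℕ) × (σ →₀ ℕ)).1 i : ℕ) : R) * (coeff (R := R) p.1 f * coeff (R := R) p.2 g)
          + (((p : (σ →₀ ℕ) × (σ →₀ ℕ)).2 i : ℕ) : R) * (coeff (R := R) p.1 f * coeff (R := R) p.2 g) := by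
    intro p hp
    rw [Finset.HasAntidiagonal.mem_antidiagonal] at hp
    have : p.1 i + p.2 i = m i + 1 := by
      have := DFunLike.congr_fun hp i
      simpa using this
    rw [← add_mul]
    congr 1
    push_cast [← this]
    ring
  rw [Finset.sum_congr rfl hsplit, Finset.sum_add_distrib]
  congr 1
  · calc ∑ p ∈ antidiagonal (m + Finsupp.single i 1),
        (((p : (σ →₀ ℕ) × (σ →₀ ℕ)).1 i : ℕ) : R) * (coeff (R := R) p.1 f * coeff (R := R) p.2 g)
        = ∑ q ∈ antidiagonal m,
            (((q : (σ →₀ ℕ) × (σ →₀ ℕ)).1 i + 1 : ℕ) : R)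
              * (coeff (R := R) (q.1 + Finsupp.single i 1) f * coeff (R := R) q.2 g) :=
          sum_antidiag_shift i m (fun a b => coeff (R := R) a f * coeff (R := R) b g)
      _ = ∑ q ∈ antidiagonal m, coeff (R := R) q.1 (pd R i f) * coeff (R := R) q.2 g := by
          refine Finset.sum_congr rfl fun q _ => ?_
          rw [coeff_pd]; ring
  · calc ∑ p ∈ antidiagonal (m + Finsupp.single i 1),
        (((p : (σ →₀ ℕ) × (σ →₀ ℕ)).2 i : ℕ) : R) * (coeff (R := R) p.1 f * coeff (R := R) p.2 g)
        = ∑ p ∈ antidiagonal (m + Finsupp.single i 1),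
            (((p : (σ →₀ ℕ) × (σ →₀ ℕ)).1 i : ℕ) : R) * (coeff (R := R) p.2 f * coeff (R := R) p.1 g) :=
          (sum_antidiagonal_swap' _ (fun a b => ((a i : ℕ) : R) * (coeff (R := R) b f * coeff (R := R) a g))).symm
      _ = ∑ q ∈ antidiagonal m,
            (((q : (σ →₀ ℕ) × (σ →₀ ℕ)).1 i + 1 : ℕ) : R) * (coeff (R := R) q.2 f * coeff (R := R) (q.1 + Finsupp.single i 1) g) :=
          sum_antidiag_shift i m (fun a b => coeff (R := R) b f * coeff (R := R) a g)
      _ = ∑ q ∈ antidiagonal m, coeff (R := R) q.2 f * coeff (R := R) q.1 (pd R i g) := by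
          refine Finset.sum_congr rfl fun q _ => ?_
          rw [coeff_pd]; ring
      _ = ∑ q ∈ antidiagonal m, coeff (R := R) q.1 f * coeff (R := R) q.2 (pd R i g) :=
          sum_antidiagonal_swap' m (fun a b => coeff (R := R) b f * coeff (R := R) a (pd R i g))

end Basic

namespace Stmt17
open MvPowerSeries Finset Finsupp

theorem mdeg_add {σ : Type*} (p q : σ →₀ ℕ) : mdeg (p + q) = mdeg p + mdeg q :=
  Finsupp.sum_add_index' (fun _ => rfl) (fun _ _ _ => rfl)

theorem mdeg_single {σ : Type*} (i : σ) : mdeg (Finsupp.single i 1) = 1 := by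
  simp [mdeg, Finsupp.sum_single_index]

theorem mdeg_eq_zero {σ : Type*} {m : σ →₀ ℕ} (h : mdeg m = 0) : m = 0 := by
  unfold mdeg at h
  rw [Finsupp.sum, Finset.sum_eq_zero_iff] at h
  ext a
  by_cases ha : a ∈ m.support
  · exact h a ha
  · simpa using Finsupp.notMem_support_iff.mp ha

variable {σ : Type*} [DecidableEq σ] {R : Type*} [CommRing R]

theorem coeff_pow_eq_zero {f : MvPowerSeries σ R} (hf : constantCoeff (σ := σ) (R := R) f = 0) :
    ∀ (k : ℕ) (m : σ →₀ ℕ), mdeg m < k → coeff (R := R) m (f ^ k) = 0 := by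
  intro k
  induction k with
  | zero => intro m hm; omega
  | succ k ih =>
    intro m hm
    rw [pow_succ, mul_comm, coeff_mul]
    apply Finset.sum_eq_zero
    intro p hp
    rw [Finset.HasAntidiagonal.mem_antidiagonal] at hp
    by_cases h1 : p.1 = 0
    · rw [h1, coeff_zero_eq_constantCoeff, hf, zero_mul]
    · have hd : mdeg p.1 + mdeg p.2 = mdeg m := by rw [← mdeg_add, hp]
      have h1' : mdeg p.1 ≠ 0 := fun hc => h1 (mdeg_eq_zero hc)
      have : mdeg p.2 < k := by omega
      rw [ih p.2 this, mul_zero]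

end Stmt17

namespace Stmt17
open MvPowerSeries Finset Finsupp

variable {σ : Type*} [DecidableEq σ] {R : Type*} [CommRing R] [Algebra ℚ R]

theorem pd_zero (i : σ) : pd R i (0 : MvPowerSeries σ R) = 0 := by
  ext m; simp [coeff_pd]

theorem coeff_qsmul (m : σ →₀ ℕ) (c : ℚ) (f : MvPowerSeries σ R) :
    coeff (R := R) m (c • f) = c • coeff (R := R) m f := rfl

theorem pd_qsmul (i : σ) (c : ℚ) (f : MvPowerSeries σ R) :
    pd R i (c • f) = c • pd R i f := by
  ext m
  rw [coeff_pd, coeff_qsmul, coeff_qsmul, coeff_pd, mul_smul_comm]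

theorem pd_neg (i : σ) (f : MvPowerSeries σ R) : pd R i (-f) = -pd R i f := by
  ext m
  simp only [coeff_pd, map_neg, mul_neg]

theorem pd_sub (i : σ) (f g : MvPowerSeries σ R) :
    pd R i (f - g) = pd R i f - pd R i g := by
  rw [sub_eq_add_neg, pd_add, pd_neg, sub_eq_add_neg]

theorem pd_sum {α : Type*} (i : σ) (s : Finset α) (F : α → MvPowerSeries σ R) :
    pd R i (∑ a ∈ s, F a) = ∑ a ∈ s, pd R i (F a) := by
  classical
  induction s using Finset.induction with
  | empty => simp [pd_zero]
  | insert _ _ h ih => rw [Finset.sum_insert h, Finset.sum_insert h, pd_add, ih]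

theorem pd_pow_succ (i : σ) (f : MvPowerSeries σ R) :
    ∀ n : ℕ, pd R i (f ^ (n + 1)) = (n + 1) • (f ^ n * pd R i f) := by
  intro n
  induction n with
  | zero => simp [pd_mul]
  | succ n ih =>
    rw [pow_succ (n := n + 1), pd_mul, ih, pow_succ]
    rw [succ_nsmul, succ_nsmul, add_mul, smul_mul_assoc]
    rw [show f ^ n * pd R i f * f = f ^ n * f * pd R i f by ring]
    rw [succ_nsmul _ n]

theorem coeff_expS_stable {f : MvPowerSeries σ R} (hf : constantCoeff (σ := σ) (R := R) f = 0)
    (m : σ →₀ ℕ) (N : ℕ) (hN : mdeg m ≤ N) :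
    coeff (R := R) m (expS f)
      = coeff (R := R) m (∑ k ∈ Finset.range (N + 1), ((k.factorial : ℚ)⁻¹) • f ^ k) := by
  have h0 : coeff (R := R) m (expS f)
      = coeff (R := R) m (∑ k ∈ Finset.range (mdeg m + 1), ((k.factorial : ℚ)⁻¹) • f ^ k) := rfl
  rw [h0, map_sum, map_sum]
  apply Finset.sum_subset
  · exact Finset.range_subset_range.mpr (by omega)
  · intro k _ hk
    rw [Finset.mem_range, not_lt] at hk
    rw [coeff_qsmul, coeff_pow_eq_zero hf k m (by omega), smul_zero]

theorem coeff_logOneSubS_stable {u : MvPowerSeries σ R} (hu : constantCoeff (σ := σ) (R := R) u = 0)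
    (m : σ →₀ ℕ) (N : ℕ) (hN : mdeg m ≤ N) :
    coeff (R := R) m (logOneSubS u)
      = coeff (R := R) m (- ∑ k ∈ Finset.Icc 1 N, ((k : ℚ)⁻¹) • u ^ k) := by
  have h0 : coeff (R := R) m (logOneSubS u)
      = coeff (R := R) m (- ∑ k ∈ Finset.Icc 1 (mdeg m), ((k : ℚ)⁻¹) • u ^ k) := rfl
  rw [h0, map_neg, map_neg, map_sum, map_sum]
  congr 1
  apply Finset.sum_subset
  · exact Finset.Icc_subset_Icc_right hN
  · intro k hk1 hk
    rw [Finset.mem_Icc] at hk1 hk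
    rw [coeff_qsmul, coeff_pow_eq_zero hu k m (by omega), smul_zero]

end Stmt17

namespace Stmt17
open MvPowerSeries Finset Finsupp

variable {σ : Type*} [DecidableEq σ] {R : Type*} [CommRing R] [Algebra ℚ R]

theorem fact_smul_aux (k : ℕ) (x : MvPowerSeries σ R) :
    (((k+1).factorial : ℚ)⁻¹) • ((k + 1) • x) = ((k.factorial : ℚ)⁻¹) • x := by
  rw [← Nat.cast_smul_eq_nsmul ℚ (k+1) x, smul_smul]
  congr 1
  have hkf : (k.factorial : ℚ) ≠ 0 := Nat.cast_ne_zero.mpr k.factorial_ne_zero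
  have hk1 : ((k : ℚ) + 1) ≠ 0 := by positivity
  rw [Nat.factorial_succ]
  push_cast
  field_simp

theorem pd_expS (i : σ) {f : MvPowerSeries σ R} (hf : constantCoeff (σ := σ) (R := R) f = 0) :
    pd R i (expS f) = pd R i f * expS f := by
  ext m
  set N := mdeg m with hNdef
  have hmd : mdeg (m + Finsupp.single i 1) = N + 1 := by rw [mdeg_add, mdeg_single]
  have hpoly : pd R i (∑ k ∈ Finset.range (N + 2), ((k.factorial : ℚ)⁻¹) • f ^ k)
      = pd R i f * ∑ k ∈ Finset.range (N + 1), ((k.factorial : ℚ)⁻¹) • f ^ k := by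
    rw [pd_sum, Finset.sum_range_succ' _ (N + 1)]
    have h0 : pd R i (((Nat.factorial 0 : ℚ)⁻¹) • f ^ 0) = 0 := by
      simp [pd_qsmul, pd_one]
    rw [h0, add_zero, Finset.mul_sum]
    refine Finset.sum_congr rfl fun k _ => ?_
    rw [pd_qsmul, pd_pow_succ, fact_smul_aux]
    rw [mul_smul_comm, mul_comm (pd R i f) (f ^ k)]
  rw [coeff_pd, coeff_expS_stable hf _ (N + 1) (le_of_eq hmd), ← coeff_pd, hpoly,
    coeff_mul, coeff_mul]
  refine Finset.sum_congr rfl fun p hp => ?_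
  rw [Finset.HasAntidiagonal.mem_antidiagonal] at hp
  have h2 : mdeg p.2 ≤ N := by
    have := mdeg_add p.1 p.2
    rw [hp] at this
    omega
  rw [coeff_expS_stable hf p.2 N h2]

theorem one_sub_mul_pd_logOneSubS (i : σ) {u : MvPowerSeries σ R}
    (hu : constantCoeff (σ := σ) (R := R) u = 0) :
    (1 - u) * pd R i (logOneSubS u) = - pd R i u := by
  ext m
  set N := mdeg m with hNdef
  set G : MvPowerSeries σ R := ∑ j ∈ Finset.range (N + 1), u ^ j with hG
  have hpoly : pd R i (- ∑ k ∈ Finset.Icc 1 (N + 1), ((k : ℚ)⁻¹) • u ^ k)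
      = -(G * pd R i u) := by
    rw [pd_neg, pd_sum, hG, Finset.sum_mul]
    congr 1
    rw [← Finset.Ico_add_one_right_eq_Icc, Finset.sum_Ico_eq_sum_range]
    simp only [show N + 1 + 1 - 1 = N + 1 from rfl]
    refine Finset.sum_congr rfl fun j _ => ?_
    rw [show 1 + j = j + 1 by omega, pd_qsmul, pd_pow_succ]
    rw [← Nat.cast_smul_eq_nsmul ℚ (j + 1), smul_smul]
    rw [show (((j + 1 : ℕ)) : ℚ)⁻¹ * (((j + 1 : ℕ)) : ℚ) = 1 by
      have h : (((j + 1 : ℕ)) : ℚ) ≠ 0 := by positivity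
      field_simp]
    rw [one_smul]
  have step1 : coeff (R := R) m ((1 - u) * pd R i (logOneSubS u))
      = coeff (R := R) m ((1 - u) * pd R i (- ∑ k ∈ Finset.Icc 1 (N + 1), ((k : ℚ)⁻¹) • u ^ k)) := by
    rw [coeff_mul, coeff_mul]
    refine Finset.sum_congr rfl fun p hp => ?_
    rw [Finset.HasAntidiagonal.mem_antidiagonal] at hp
    have h2 : mdeg p.2 ≤ N := by
      have := mdeg_add p.1 p.2
      rw [hp] at this
      omega
    congr 1
    rw [coeff_pd, coeff_pd]
    congr 1
    apply coeff_logOneSubS_stable hu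
    rw [mdeg_add, mdeg_single]
    omega
  have hgeom : (1 - u) * G = 1 - u ^ (N + 1) := by
    have h := geom_sum_mul u (N + 1)
    rw [hG]
    linear_combination -h
  have key : (1 - u) * (-(G * pd R i u)) = -pd R i u + u ^ (N + 1) * pd R i u := by
    linear_combination (-(pd R i u)) * hgeom
  have step4 : coeff (R := R) m (u ^ (N + 1) * pd R i u) = 0 := by
    rw [coeff_mul]
    apply Finset.sum_eq_zero
    intro p hp
    rw [Finset.HasAntidiagonal.mem_antidiagonal] at hp
    have h1 : mdeg p.1 ≤ N := by
      have := mdeg_add p.1 p.2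
      rw [hp] at this
      omega
    rw [coeff_pow_eq_zero hu (N + 1) p.1 (by omega), zero_mul]
  rw [step1, hpoly, key, map_add, step4, add_zero]

end Stmt17

namespace Stmt17
open MvPowerSeries Finset Finsupp

variable {σ : Type*} [DecidableEq σ] {R : Type*} [CommRing R] [Algebra ℚ R]

theorem coeff_X_mul_zero (j : σ) (m : σ →₀ ℕ) (hm : m j = 0) (g : MvPowerSeries σ R) :
    coeff (R := R) m (X j * g) = 0 := by
  rw [coeff_mul]
  apply Finset.sum_eq_zero
  intro p hp
  rw [Finset.HasAntidiagonal.mem_antidiagonal] at hp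
  rcases eq_or_ne p.1 (Finsupp.single j 1) with h | h
  · exfalso
    have hj := DFunLike.congr_fun hp j
    rw [Finsupp.add_apply, h, Finsupp.single_eq_same] at hj
    omega
  · rw [coeff_X, if_neg h, zero_mul]

theorem coeff_logOneSubS_X_mul (j : σ) (m : σ →₀ ℕ) (hm : m j = 0) (g : MvPowerSeries σ R) :
    coeff (R := R) m (logOneSubS (X j * g)) = 0 := by
  have h0 : coeff (R := R) m (logOneSubS (X j * g))
      = coeff (R := R) m (- ∑ k ∈ Finset.Icc 1 (mdeg m), ((k : ℚ)⁻¹) • (X j * g) ^ k) := rfl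
  rw [h0, map_neg, map_sum]
  have hz : ∀ k ∈ Finset.Icc 1 (mdeg m), coeff (R := R) m (((k : ℚ)⁻¹) • (X j * g) ^ k) = 0 := by
    intro k hk
    rw [Finset.mem_Icc] at hk
    obtain ⟨k', rfl⟩ : ∃ k', k = k' + 1 := ⟨k - 1, by omega⟩
    rw [coeff_qsmul, show (X j * g) ^ (k' + 1) = X j * (g * (X j * g) ^ k') by ring,
      coeff_X_mul_zero j m hm, smul_zero]
  rw [Finset.sum_eq_zero hz, neg_zero]

theorem uniq (Φ D : MvPowerSeries (Fin 2) ℚ) (hD : pd ℚ 1 D = Φ * pd ℚ 0 D)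
    (h0 : ∀ m : Fin 2 →₀ ℕ, m 1 = 0 → coeff (R := ℚ) m D = 0) : D = 0 := by
  have key : ∀ n : ℕ, ∀ m : Fin 2 →₀ ℕ, m 1 ≤ n → coeff (R := ℚ) m D = 0 := by
    intro n
    induction n with
    | zero => exact fun m hm => h0 m (Nat.le_zero.mp hm)
    | succ n ih =>
      intro m hm
      by_cases hcase : m 1 ≤ n
      · exact ih m hcase
      · have hm1 : m 1 = n + 1 := by omega
        have hle : Finsupp.single 1 1 ≤ m := Finsupp.single_le_iff.mpr (by omega)
        have hsum : (m - Finsupp.single 1 1) + Finsupp.single 1 1 = m := tsub_add_cancel_of_le hle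
        have hms : ((m - Finsupp.single 1 1 : Fin 2 →₀ ℕ)) 1 = n := by
          rw [Finsupp.tsub_apply, Finsupp.single_eq_same]
          omega
        have h1 : coeff (R := ℚ) (m - Finsupp.single 1 1) (pd ℚ 1 D)
            = ((((m - Finsupp.single 1 1 : Fin 2 →₀ ℕ)) 1 + 1 : ℕ) : ℚ) * coeff (R := ℚ) m D := by
          rw [coeff_pd, hsum]
        have h2 : coeff (R := ℚ) (m - Finsupp.single 1 1) (Φ * pd ℚ 0 D) = 0 := by
          rw [coeff_mul]
          apply Finset.sum_eq_zero
          intro p hp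
          rw [Finset.HasAntidiagonal.mem_antidiagonal] at hp
          have hp2 : p.2 1 ≤ n := by
            have hpa := DFunLike.congr_fun hp 1
            rw [Finsupp.add_apply] at hpa
            omega
          have hz : coeff (R := ℚ) (p.2 + Finsupp.single 0 1) D = 0 := by
            apply ih
            rw [Finsupp.add_apply, Finsupp.single_eq_of_ne (by decide : (1 : Fin 2) ≠ 0)]
            omega
          rw [coeff_pd, hz, mul_zero, mul_zero]
        rw [hD, h2] at h1
        have hnz : ((((m - Finsupp.single 1 1 : Fin 2 →₀ ℕ)) 1 + 1 : ℕ) : ℚ) ≠ 0 := by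
          positivity
        exact ((mul_eq_zero.mp h1.symm).resolve_left hnz)
  ext m
  simpa using key (m 1) m le_rfl

theorem fin2_eq_single (m : Fin 2 →₀ ℕ) (h : m 1 = 0) : m = Finsupp.single 0 (m 0) := by
  ext a
  fin_cases a
  · simp
  · simpa using h

end Stmt17

open MvPowerSeries Stmt17 in
/-- Let `Φ` be the unique series with `exp(x + sΦ) = 1 + x + (s+1)Φ`.
If `Ψ₁` satisfies `∂Ψ₁/∂s = ½(∂Φ/∂x + 2Φ·∂Ψ₁/∂x)` with `Ψ₁|_{s=0} = 0`, then
`Ψ₁ = −½·log(1 − s(x + (s+1)Φ))`. -/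
theorem stmt17 (Φ Ψ₁ : MvPowerSeries (Fin 2) ℚ)
    (hΦ : expS (MvPowerSeries.X 0 + MvPowerSeries.X 1 * Φ) =
      1 + MvPowerSeries.X 0 + (MvPowerSeries.X 1 + 1) * Φ)
    (heq : pd ℚ 1 Ψ₁ = (2 : ℚ)⁻¹ • (pd ℚ 0 Φ + 2 * Φ * pd ℚ 0 Ψ₁))
    (hinit : ∀ n : ℕ, MvPowerSeries.coeff (R := ℚ) (Finsupp.single 0 n) Ψ₁ = 0) :
    Ψ₁ = -((2 : ℚ)⁻¹) • logOneSubS (MvPowerSeries.X 1 *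
      (MvPowerSeries.X 0 + (MvPowerSeries.X 1 + 1) * Φ)) := by
  have e01 : (0 : Fin 2) ≠ 1 := by decide
  have half2 : ∀ w : MvPowerSeries (Fin 2) ℚ, (2 : ℚ)⁻¹ • (2 * w) = w := by
    intro w
    have h2w : (2 : ℚ) • w = 2 * w := by rw [Algebra.smul_def, map_ofNat]
    rw [← h2w, smul_smul, show (2 : ℚ)⁻¹ * 2 = 1 by norm_num, one_smul]
  have e10 : (1 : Fin 2) ≠ 0 := by decide
  have hf0 : constantCoeff (σ := Fin 2) (R := ℚ) (X 0 + X 1 * Φ) = 0 := by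
    simp
  have hu0 : constantCoeff (σ := Fin 2) (R := ℚ) (X 1 * (X 0 + (X 1 + 1) * Φ)) = 0 := by
    simp
  -- derivative computations
  have hDxf : pd ℚ 0 (X 0 + X 1 * Φ : MvPowerSeries (Fin 2) ℚ)
      = 1 + X 1 * pd ℚ 0 Φ := by
    simp only [pd_add, pd_mul, pd_one, pd_X_self, pd_X_ne 0 1 e01]
    ring
  have hDsf : pd ℚ 1 (X 0 + X 1 * Φ : MvPowerSeries (Fin 2) ℚ)
      = Φ + X 1 * pd ℚ 1 Φ := by
    simp only [pd_add, pd_mul, pd_one, pd_X_self, pd_X_ne 1 0 e10]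
    ring
  have hDxE : pd ℚ 0 (1 + X 0 + (X 1 + 1) * Φ : MvPowerSeries (Fin 2) ℚ)
      = 1 + (X 1 + 1) * pd ℚ 0 Φ := by
    simp only [pd_add, pd_mul, pd_one, pd_X_self, pd_X_ne 0 1 e01]
    ring
  have hDsE : pd ℚ 1 (1 + X 0 + (X 1 + 1) * Φ : MvPowerSeries (Fin 2) ℚ)
      = Φ + (X 1 + 1) * pd ℚ 1 Φ := by
    simp only [pd_add, pd_mul, pd_one, pd_X_self, pd_X_ne 1 0 e10]
    ring
  -- relations from hΦ
  have hR1 : (1 : MvPowerSeries (Fin 2) ℚ) + (X 1 + 1) * pd ℚ 0 Φ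
      = (1 + X 1 * pd ℚ 0 Φ) * (1 + X 0 + (X 1 + 1) * Φ) := by
    have h := pd_expS 0 hf0 (f := X 0 + X 1 * Φ)
    rw [hΦ, hDxE, hDxf] at h
    exact h
  have hR2 : Φ + (X 1 + 1) * pd ℚ 1 Φ
      = (Φ + X 1 * pd ℚ 1 Φ) * (1 + X 0 + (X 1 + 1) * Φ) := by
    have h := pd_expS 1 hf0 (f := X 0 + X 1 * Φ)
    rw [hΦ, hDsE, hDsf] at h
    exact h
  have hA : pd ℚ 0 Φ * (1 - X 1 * (X 0 + (X 1 + 1) * Φ))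
      = (1 + X 0 + (X 1 + 1) * Φ) - 1 := by
    linear_combination hR1
  have hB : pd ℚ 1 Φ * (1 - X 1 * (X 0 + (X 1 + 1) * Φ))
      = Φ * (X 0 + (X 1 + 1) * Φ) := by
    linear_combination hR2
  have hcu : constantCoeff (σ := Fin 2) (R := ℚ)
      (1 - X 1 * (X 0 + (X 1 + 1) * Φ)) = 1 := by
    rw [map_sub, map_one, hu0, sub_zero]
  have hne : (1 - X 1 * (X 0 + (X 1 + 1) * Φ) : MvPowerSeries (Fin 2) ℚ) ≠ 0 := by
    intro h
    rw [h, map_zero] at hcu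
    exact one_ne_zero hcu.symm
  have hC : pd ℚ 1 Φ = Φ * pd ℚ 0 Φ := by
    have hz : (pd ℚ 1 Φ - Φ * pd ℚ 0 Φ) * (1 - X 1 * (X 0 + (X 1 + 1) * Φ)) = 0 := by
      linear_combination hB - Φ * hA
    rcases mul_eq_zero.mp hz with h | h
    · exact sub_eq_zero.mp h
    · exact absurd h hne
  -- derivatives of u
  have hDu1 : pd ℚ 1 (X 1 * (X 0 + (X 1 + 1) * Φ) : MvPowerSeries (Fin 2) ℚ)
      = (X 0 + (X 1 + 1) * Φ) + X 1 * (Φ + (X 1 + 1) * pd ℚ 1 Φ) := by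
    simp only [pd_add, pd_mul, pd_one, pd_X_self, pd_X_ne 1 0 e10]
    ring
  have hDu0 : pd ℚ 0 (X 1 * (X 0 + (X 1 + 1) * Φ) : MvPowerSeries (Fin 2) ℚ)
      = X 1 * (1 + (X 1 + 1) * pd ℚ 0 Φ) := by
    simp only [pd_add, pd_mul, pd_one, pd_X_self, pd_X_ne 0 1 e01]
    ring
  have hkey : pd ℚ 1 (X 1 * (X 0 + (X 1 + 1) * Φ) : MvPowerSeries (Fin 2) ℚ)
      = (1 - X 1 * (X 0 + (X 1 + 1) * Φ)) * pd ℚ 0 Φ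
        + Φ * pd ℚ 0 (X 1 * (X 0 + (X 1 + 1) * Φ)) := by
    rw [hDu1, hDu0]
    linear_combination -hA + (X 1 * (X 1 + 1)) * hC
  -- log derivative relations
  have hL1 := one_sub_mul_pd_logOneSubS 1 hu0 (u := X 1 * (X 0 + (X 1 + 1) * Φ))
  have hL0 := one_sub_mul_pd_logOneSubS 0 hu0 (u := X 1 * (X 0 + (X 1 + 1) * Φ))
  have h2 : (MvPowerSeries.C (σ := Fin 2) (R := ℚ)) (2 : ℚ)⁻¹ * 2 = 1 := by
    rw [show (2 : MvPowerSeries (Fin 2) ℚ) = MvPowerSeries.C (σ := Fin 2) (R := ℚ) 2 from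
      (map_ofNat _ 2).symm, ← map_mul]
    norm_num
  -- the candidate solution satisfies the PDE
  have hPDE : pd ℚ 1 (-((2 : ℚ)⁻¹) • logOneSubS (X 1 * (X 0 + (X 1 + 1) * Φ)))
      = (2 : ℚ)⁻¹ • (pd ℚ 0 Φ
        + 2 * Φ * pd ℚ 0 (-((2 : ℚ)⁻¹) • logOneSubS (X 1 * (X 0 + (X 1 + 1) * Φ)))) := by
    apply mul_right_cancel₀ hne
    simp only [neg_smul, pd_neg, pd_qsmul]
    simp only [smul_eq_C_mul]
    linear_combination (-(MvPowerSeries.C (σ := Fin 2) (R := ℚ) (2 : ℚ)⁻¹)) * hL1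
      + (MvPowerSeries.C (σ := Fin 2) (R := ℚ) (2 : ℚ)⁻¹) * hkey
      + (2 * (MvPowerSeries.C (σ := Fin 2) (R := ℚ) (2 : ℚ)⁻¹) ^ 2 * Φ) * hL0
      + (-((MvPowerSeries.C (σ := Fin 2) (R := ℚ) (2 : ℚ)⁻¹) * Φ
          * pd ℚ 0 (X 1 * (X 0 + (X 1 + 1) * Φ)))) * h2
  -- uniqueness
  have hdiff : Ψ₁ - (-((2 : ℚ)⁻¹) • logOneSubS (X 1 * (X 0 + (X 1 + 1) * Φ))) = 0 := by
    apply uniq Φ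
    · rw [pd_sub, pd_sub, heq, hPDE, ← smul_sub, mul_sub]
      rw [show (pd ℚ 0 Φ + 2 * Φ * pd ℚ 0 Ψ₁) -
          (pd ℚ 0 Φ + 2 * Φ * pd ℚ 0 (-((2 : ℚ)⁻¹) • logOneSubS
            (X 1 * (X 0 + (X 1 + 1) * Φ)))) =
          2 * (Φ * pd ℚ 0 Ψ₁ - Φ * pd ℚ 0 (-((2 : ℚ)⁻¹) • logOneSubS
            (X 1 * (X 0 + (X 1 + 1) * Φ))))
        from by ring, half2]
    · intro m hm
      rw [map_sub]
      have hlz : coeff (R := ℚ) m (logOneSubS (X 1 * (X 0 + (X 1 + 1) * Φ))) = 0 :=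
        coeff_logOneSubS_X_mul 1 m hm _
      rw [fin2_eq_single m hm, hinit (m 0), ← fin2_eq_single m hm]
      rw [coeff_qsmul, hlz, smul_zero, sub_zero]
  exact sub_eq_zero.mp hdiff
end
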